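/- arXiv:2007.12527 — 4 statements merged into one kernel-verified Lean document; each statement's English description precedes it below -/
import Mathlib

section
/- An oriented matroid G is a uniform oriented matroid if and only if every proper face of G (proper antipodal subgraph of its tope graph) is a hypercube, and this holds if and only if every halfspace of its tope graph is an ample partial cube. -/
open Finset
open scoped Classical

variable {U : Type*}

/-- Hamming distance between two vertices of the hypercube `U → Bool`. -/
def hDist [Fintype U] [DecidableEq U] (x y : U → Bool) : ℕ :=
  (Finset.univ.filter fun i => x i ≠ y i).card

/-- The hypercube graph on `U → Bool`: two vertices are adjacent iff they differ
in exactly one coordinate. -/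
def cubeGraph (U : Type*) [Fintype U] [DecidableEq U] : SimpleGraph (U → Bool) where
  Adj x y := hDist x y = 1
  symm := by
    constructor
    intro x y h
    have hs : (Finset.univ.filter fun i => y i ≠ x i) =
        (Finset.univ.filter fun i => x i ≠ y i) := by
      apply Finset.filter_congr
      intro i _
      exact ne_comm
    simpa [hDist, hs] using h
  loopless := by
    constructor
    intro x h
    simp [hDist] at h

/-- Distance between `x` and `y` inside the subgraph of the hypercube induced by `A`
(`0` if one of them is not in `A`). -/
noncomputable def dIn [Fintype U] [DecidableEq U] (A : Set (U → Bool)) (x y : U → Bool) : ℕ :=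
  if h : x ∈ A ∧ y ∈ A then ((cubeGraph U).induce A).dist ⟨x, h.1⟩ ⟨y, h.2⟩ else 0

/-- A set of vertices of the hypercube is a partial cube if its induced graph is connected
and the induced graph distance coincides with the Hamming distance
(i.e. it is an isometric subgraph of the hypercube). -/
def IsPartialCube [Fintype U] [DecidableEq U] (A : Set (U → Bool)) : Prop :=
  ((cubeGraph U).induce A).Connected ∧ ∀ x ∈ A, ∀ y ∈ A, dIn A x y = hDist x y

/-- `A` shatters the coordinate set `X`. -/
def Shatters [Fintype U] [DecidableEq U] (A : Set (U → Bool)) (X : Finset U) : Prop :=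
  ∀ g : U → Bool, ∃ a ∈ A, ∀ i ∈ X, a i = g i

/-- `A` strongly shatters `X`: it contains a full subcube over the coordinates `X`. -/
def StronglyShatters [Fintype U] [DecidableEq U] (A : Set (U → Bool)) (X : Finset U) : Prop :=
  ∃ a : U → Bool, ∀ g : U → Bool, (fun i => if i ∈ X then g i else a i) ∈ A

/-- An ample set family: every shattered set is strongly shattered. -/
def IsAmple [Fintype U] [DecidableEq U] (A : Set (U → Bool)) : Prop :=
  ∀ X : Finset U, Shatters A X → StronglyShatters A X

/-- Composition of sign vectors: `(X ∘ Y) e = X e` if `X e ≠ 0`, else `Y e`. -/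
def comp (X Y : U → SignType) : U → SignType := fun e => if X e = 0 then Y e else X e

/-- The support of a sign vector. -/
def supp (X : U → SignType) : Set U := {e | X e ≠ 0}

/-- The separator of two sign vectors. -/
def sep [Fintype U] [DecidableEq U] (X Y : U → SignType) : Finset U :=
  Finset.univ.filter fun e => X e * Y e = -1

/-- A complex of oriented matroids: face symmetry and strong elimination. -/
structure IsCOM (L : Set (U → SignType)) : Prop where
  fs : ∀ X ∈ L, ∀ Y ∈ L, comp X (-Y) ∈ L
  se : ∀ X ∈ L, ∀ Y ∈ L, ∀ e : U, X e * Y e = -1 →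
      ∃ Z ∈ L, Z e = 0 ∧ ∀ f : U, X f * Y f ≠ -1 → Z f = comp X Y f

/-- An oriented matroid: composition, strong elimination and symmetry. -/
structure IsOM (L : Set (U → SignType)) : Prop where
  c : ∀ X ∈ L, ∀ Y ∈ L, comp X Y ∈ L
  se : ∀ X ∈ L, ∀ Y ∈ L, ∀ e : U, X e * Y e = -1 →
      ∃ Z ∈ L, Z e = 0 ∧ ∀ f : U, X f * Y f ≠ -1 → Z f = comp X Y f
  sym : ∀ X ∈ L, -X ∈ L

/-- A simple system of sign vectors. -/
def SimpleSV (L : Set (U → SignType)) : Prop :=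
  (∀ e : U, ∀ s : SignType, ∃ X ∈ L, X e = s) ∧
  ∀ e f : U, e ≠ f → (∃ X ∈ L, X e * X f = 1) ∧ (∃ Y ∈ L, Y e * Y f = -1)

/-- The topes of a system of sign vectors: the covectors with full support. -/
def Topes (L : Set (U → SignType)) : Set (U → SignType) := {X ∈ L | ∀ e, X e ≠ 0}

/-- Conversion of a (full support) sign vector to a vertex of the hypercube. -/
def tb (X : U → SignType) : U → Bool := fun e => decide (X e = 1)

/-- The vertex set of the tope graph inside the hypercube. -/
def TopeSet (L : Set (U → SignType)) : Set (U → Bool) := tb '' Topes L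

/-- The face of a covector `X`. -/
def face (L : Set (U → SignType)) (X : U → SignType) : Set (U → SignType) :=
  {Z | ∃ Y ∈ L, Z = comp X Y}

/-- `X` is a cocircuit of `L`: a minimal nonzero covector with respect to the conformal
order. -/
def Cocircuit (L : Set (U → SignType)) (X : U → SignType) : Prop :=
  X ∈ L ∧ X ≠ 0 ∧ ∀ Y ∈ L, Y ≠ 0 → (∀ e, Y e = 0 ∨ Y e = X e) → Y = X

/-- `L` is a uniform oriented matroid of rank `r` on the `m`-element set `U`: the cocircuits
are exactly the (pairs of opposite) signings of the subsets of `U` of size `m - r + 1`. -/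
def IsUOMofRank [Fintype U] [DecidableEq U] (L : Set (U → SignType)) (r : ℕ) : Prop :=
  (∀ X : U → SignType, Cocircuit L X →
      (Finset.univ.filter fun e => X e ≠ 0).card = Fintype.card U - r + 1) ∧
  (∀ A : Finset U, A.card = Fintype.card U - r + 1 →
      ∃ X : U → SignType, Cocircuit L X ∧ (Finset.univ.filter fun e => X e ≠ 0) = A) ∧
  (∀ X Y : U → SignType, Cocircuit L X → Cocircuit L Y →
      (∀ e, X e ≠ 0 ↔ Y e ≠ 0) → Y = X ∨ Y = -X)


set_option linter.unusedSectionVars false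
set_option linter.unusedVariables false
set_option linter.unreachableTactic false
set_option linter.unusedTactic false
set_option maxHeartbeats 1000000

namespace S15

/-- Bool to sign. -/
def bs (b : Bool) : SignType := if b then 1 else -1

lemma bs_ne_zero (b : Bool) : bs b ≠ 0 := by cases b <;> simp [bs]

lemma bs_true : bs true = 1 := rfl
lemma bs_false : bs false = -1 := rfl

lemma sign_cases (s : SignType) : s = 0 ∨ s = 1 ∨ s = -1 := by
  cases s
  · exact Or.inl rfl
  · exact Or.inr (Or.inr rfl)
  · exact Or.inr (Or.inl rfl)

lemma sq_ne_neg_one (s t : SignType) (h : s = t) : s * t ≠ -1 := by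
  subst h; cases s <;> decide

lemma eq_of_ne_zero_not_conf (s t : SignType) (hs : s ≠ 0) (ht : t ≠ 0)
    (h : s * t ≠ -1) : t = s := by
  cases s <;> cases t <;> simp_all

lemma neg_of_mul_neg_one (s t : SignType) (h : s * t = -1) : t = -s := by
  cases s <;> cases t <;> simp_all

lemma mul_neg_one_of_ne (s t : SignType) (hs : s ≠ 0) (ht : t ≠ 0) (h : t ≠ s) :
    s * t = -1 := by
  cases s <;> cases t <;> simp_all

lemma nonzero_of_mul_neg_one {s t : SignType} (h : s * t = -1) : s ≠ 0 ∧ t ≠ 0 := by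
  constructor <;> rintro rfl <;> simp_all

lemma eq_or_eq_neg_of_ne_zero (s t : SignType) (hs : s ≠ 0) (ht : t ≠ 0) :
    s = t ∨ s = -t := by
  cases s <;> cases t <;> simp_all

lemma mul_self_neg_one (s : SignType) (hs : s ≠ 0) : s * (-s) = -1 := by
  cases s <;> simp_all

variable [Fintype U] [DecidableEq U]

/-- Sign vector of a cube vertex. -/
def sv (v : U → Bool) : U → SignType := fun e => bs (v e)

/-- `Y` lies above (conformally extends) `X`. -/
def conf (X Y : U → SignType) : Prop := ∀ e, X e = 0 ∨ X e = Y e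

def suppF (X : U → SignType) : Finset U := univ.filter fun e => X e ≠ 0
def zerosF (X : U → SignType) : Finset U := univ.filter fun e => X e = 0

lemma mem_suppF {X : U → SignType} {e : U} : e ∈ suppF X ↔ X e ≠ 0 := by
  simp [suppF]

lemma mem_zerosF {X : U → SignType} {e : U} : e ∈ zerosF X ↔ X e = 0 := by
  simp [zerosF]

lemma conf_refl (X : U → SignType) : conf X X := fun e => Or.inr rfl

lemma conf_trans {X Y Z : U → SignType} (h1 : conf X Y) (h2 : conf Y Z) : conf X Z := by
  intro e
  rcases h1 e with h | h
  · exact Or.inl h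
  · rcases h2 e with h' | h'
    · rw [h] at *; exact Or.inl h'
    · exact Or.inr (h.trans h')

lemma conf_eq_of_ne_zero {X Y : U → SignType} (h : conf X Y) {e : U} (he : X e ≠ 0) :
    X e = Y e := (h e).resolve_left he

lemma suppF_subset_of_conf {X Y : U → SignType} (h : conf X Y) : suppF X ⊆ suppF Y := by
  intro e he
  rw [mem_suppF] at *
  rw [← conf_eq_of_ne_zero h he]; exact he

lemma eq_of_conf_of_suppF_eq {X Y : U → SignType} (h : conf X Y) (hs : suppF X = suppF Y) :
    X = Y := by
  funext e
  rcases h e with h0 | he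
  · have : e ∉ suppF X := by rw [mem_suppF]; simpa using h0
    rw [hs, mem_suppF] at this
    simp at this
    rw [h0, this]
  · exact he

lemma ne_zero_iff {X : U → SignType} : X ≠ 0 ↔ ∃ e, X e ≠ 0 := by
  rw [Function.ne_iff]; rfl

lemma suppF_nonempty_of_ne_zero {X : U → SignType} (h : X ≠ 0) : (suppF X).Nonempty := by
  rcases ne_zero_iff.1 h with ⟨e, he⟩
  exact ⟨e, mem_suppF.2 he⟩

lemma ne_zero_of_mem_suppF {X : U → SignType} {e : U} (h : e ∈ suppF X) : X ≠ 0 :=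
  ne_zero_iff.2 ⟨e, mem_suppF.1 h⟩

-- comp lemmas
lemma comp_eq_left {X Y : U → SignType} {e : U} (h : X e ≠ 0) : comp X Y e = X e := by
  simp [comp, h]

lemma comp_eq_right {X Y : U → SignType} {e : U} (h : X e = 0) : comp X Y e = Y e := by
  simp [comp, h]

lemma conf_comp (X Y : U → SignType) : conf X (comp X Y) := by
  intro e
  by_cases h : X e = 0
  · exact Or.inl h
  · exact Or.inr (comp_eq_left h).symm

lemma comp_eq_of_eq {X Y : U → SignType} {e : U} (h : X e = Y e) : comp X Y e = X e := by
  by_cases h0 : X e = 0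
  · rw [comp_eq_right h0, ← h, h0]
  · exact comp_eq_left h0

lemma comp_eq_self_of_conf {X Y : U → SignType} (h : conf X Y) : ∀ e, X e ≠ 0 → comp Y X e = Y e := by
  intro e he
  rw [comp_eq_left]
  rw [← conf_eq_of_ne_zero h he]; exact he


variable {L : Set (U → SignType)}

/-- Strong elimination property. -/
def SE (L : Set (U → SignType)) : Prop := ∀ X ∈ L, ∀ Y ∈ L, ∀ e : U, X e * Y e = -1 →
      ∃ Z ∈ L, Z e = 0 ∧ ∀ f : U, X f * Y f ≠ -1 → Z f = comp X Y f

/-- The fundamental elimination cascade: if all sign patterns on `S` are realized by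
covectors with fixed values `c` on `K`, then there is a covector vanishing on `S` with
values `c` on `K`. -/
lemma elim_family (hse : SE L) (S : Finset U) :
    ∀ K : Finset U, Disjoint S K → ∀ c : U → SignType,
      (∀ g : U → Bool, ∃ Z ∈ L, (∀ x ∈ S, Z x = bs (g x)) ∧ (∀ y ∈ K, Z y = c y)) →
      ∃ V ∈ L, (∀ x ∈ S, V x = 0) ∧ (∀ y ∈ K, V y = c y) := by
  induction S using Finset.induction_on with
  | empty =>
    intro K _ c hfam
    obtain ⟨Z, hZ, _, hK⟩ := hfam fun _ => true
    exact ⟨Z, hZ, by simp, hK⟩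
  | @insert x S hx IH =>
    intro K hdisj c hfam
    have hxK : x ∉ K := by
      intro h
      exact (Finset.disjoint_left.1 hdisj (Finset.mem_insert_self x S)) h
    have hSK : Disjoint S (insert x K) := by
      rw [Finset.disjoint_left]
      intro a ha hmem
      rcases Finset.mem_insert.1 hmem with rfl | hK'
      · exact hx ha
      · exact (Finset.disjoint_left.1 hdisj (Finset.mem_insert_of_mem ha)) hK'
    have hfam' : ∀ g : U → Bool, ∃ Z ∈ L, (∀ x' ∈ S, Z x' = bs (g x')) ∧
        (∀ y ∈ insert x K, Z y = Function.update c x 0 y) := by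
      intro g
      obtain ⟨Zp, hZp, hZpS, hZpK⟩ := hfam (Function.update g x true)
      obtain ⟨Zm, hZm, hZmS, hZmK⟩ := hfam (Function.update g x false)
      have hZpx : Zp x = 1 := by
        have := hZpS x (Finset.mem_insert_self x S)
        simpa [bs] using this
      have hZmx : Zm x = -1 := by
        have := hZmS x (Finset.mem_insert_self x S)
        simpa [bs] using this
      have hconf : Zp x * Zm x = -1 := by rw [hZpx, hZmx]; decide
      obtain ⟨W, hW, hWx, hWf⟩ := hse Zp hZp Zm hZm x hconf
      have agree : ∀ f, f ≠ x → ((f ∈ S ∧ Zp f = bs (g f) ∧ Zm f = bs (g f)) ∨ True) := by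
        intro f _; exact Or.inr trivial
      refine ⟨W, hW, ?_, ?_⟩
      · intro f hf
        have hfx : f ≠ x := fun h => hx (h ▸ hf)
        have h1 : Zp f = bs (g f) := by
          have := hZpS f (Finset.mem_insert_of_mem hf)
          rwa [Function.update_of_ne hfx] at this
        have h2 : Zm f = bs (g f) := by
          have := hZmS f (Finset.mem_insert_of_mem hf)
          rwa [Function.update_of_ne hfx] at this
        have heq : Zp f = Zm f := h1.trans h2.symm
        have := hWf f (sq_ne_neg_one _ _ heq)
        rw [this, comp_eq_of_eq heq, h1]
      · intro y hy
        rcases Finset.mem_insert.1 hy with rfl | hK'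
        · rw [Function.update_self]; exact hWx
        · have h1 : Zp y = c y := hZpK y hK'
          have h2 : Zm y = c y := hZmK y hK'
          have heq : Zp y = Zm y := h1.trans h2.symm
          have := hWf y (sq_ne_neg_one _ _ heq)
          rw [this, comp_eq_of_eq heq, h1]
          have hyx : y ≠ x := fun h => hxK (h ▸ hK')
          rw [Function.update_of_ne hyx]
    obtain ⟨V, hV, hVS, hVK⟩ := IH (insert x K) hSK (Function.update c x 0) hfam'
    refine ⟨V, hV, ?_, ?_⟩
    · intro y hy
      rcases Finset.mem_insert.1 hy with rfl | hS
      · have := hVK y (Finset.mem_insert_self y K)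
        simpa using this
      · exact hVS y hS
    · intro y hy
      have := hVK y (Finset.mem_insert_of_mem hy)
      have hyx : y ≠ x := fun h => hxK (h ▸ hy)
      rwa [Function.update_of_ne hyx] at this

lemma exists_cocircuit_conf (X : U → SignType) (hX : X ∈ L) (hX0 : X ≠ 0) :
    ∃ C, Cocircuit L C ∧ conf C X := by
  classical
  set F : Finset (U → SignType) := univ.filter (fun Y => Y ∈ L ∧ Y ≠ 0 ∧ conf Y X) with hF
  have hXF : X ∈ F := by
    simp only [hF, Finset.mem_filter, Finset.mem_univ, true_and]
    exact ⟨hX, hX0, conf_refl X⟩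
  obtain ⟨C, hCF, hmin⟩ := F.exists_min_image (fun Y => (suppF Y).card) ⟨X, hXF⟩
  simp only [hF, Finset.mem_filter, Finset.mem_univ, true_and] at hCF
  refine ⟨C, ⟨hCF.1, hCF.2.1, ?_⟩, hCF.2.2⟩
  intro Y hY hY0 hconf
  have hconf' : conf Y C := hconf
  have hYF : Y ∈ F := by
    simp only [hF, Finset.mem_filter, Finset.mem_univ, true_and]
    exact ⟨hY, hY0, conf_trans hconf' hCF.2.2⟩
  have hle := hmin Y hYF
  exact eq_of_conf_of_suppF_eq hconf'
    (Finset.eq_of_subset_of_card_le (suppF_subset_of_conf hconf') hle)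

lemma tope_of_zeros_empty {X : U → SignType} (h : (zerosF X).card = 0) : ∀ e, X e ≠ 0 := by
  intro e he
  have : e ∈ zerosF X := mem_zerosF.2 he
  rw [Finset.card_eq_zero] at h
  simp [h] at this

lemma exists_tope_conf (hc : ∀ X ∈ L, ∀ Y ∈ L, comp X Y ∈ L)
    (hs1 : ∀ e : U, ∀ s : SignType, ∃ X ∈ L, X e = s) :
    ∀ (n : ℕ) (X : U → SignType), X ∈ L → (zerosF X).card ≤ n →
      ∃ T ∈ L, conf X T ∧ ∀ e, T e ≠ 0 := by
  intro n
  induction n with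
  | zero =>
    intro X hX h0
    exact ⟨X, hX, conf_refl X, tope_of_zeros_empty (Nat.le_zero.1 h0)⟩
  | succ n IH =>
    intro X hX hcard
    rcases Finset.eq_empty_or_nonempty (zerosF X) with he | ⟨e, he⟩
    · exact ⟨X, hX, conf_refl X, tope_of_zeros_empty (by rw [he]; rfl)⟩
    · obtain ⟨W, hW, hWe⟩ := hs1 e 1
      have hXe : X e = 0 := mem_zerosF.1 he
      have hX' : comp X W ∈ L := hc X hX W hW
      have hsub : zerosF (comp X W) ⊆ (zerosF X).erase e := by
        intro f hf
        rw [mem_zerosF] at hf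
        rw [Finset.mem_erase]
        constructor
        · rintro rfl
          rw [comp_eq_right hXe, hWe] at hf
          exact one_ne_zero hf
        · rw [mem_zerosF]
          by_contra h0
          rw [comp_eq_left h0] at hf
          exact h0 hf
      have hcard' : (zerosF (comp X W)).card ≤ n := by
        have h1 := Finset.card_le_card hsub
        rw [Finset.card_erase_of_mem he] at h1
        omega
      obtain ⟨T, hT, hconf, htope⟩ := IH (comp X W) hX' hcard'
      exact ⟨T, hT, conf_trans (conf_comp X W) hconf, htope⟩

lemma exists_tope_above (hc : ∀ X ∈ L, ∀ Y ∈ L, comp X Y ∈ L)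
    (hs1 : ∀ e : U, ∀ s : SignType, ∃ X ∈ L, X e = s)
    (X : U → SignType) (hX : X ∈ L) : ∃ T ∈ L, conf X T ∧ ∀ e, T e ≠ 0 :=
  exists_tope_conf hc hs1 (zerosF X).card X hX le_rfl

lemma neg_ne_zero_sign (s : SignType) (h : s ≠ 0) : -s ≠ 0 := by cases s <;> simp_all

lemma neg_ne_zero_vec {X : U → SignType} (h : X ≠ 0) : -X ≠ 0 := by
  rcases ne_zero_iff.1 h with ⟨e, he⟩
  exact ne_zero_iff.2 ⟨e, by rw [Pi.neg_apply]; exact neg_ne_zero_sign _ he⟩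

lemma suppF_neg (X : U → SignType) : suppF (-X) = suppF X := by
  ext u
  simp only [mem_suppF, Pi.neg_apply]
  constructor
  · intro h h0; rw [h0] at h; simp at h
  · exact neg_ne_zero_sign _

lemma mem_sep {X Y : U → SignType} {e : U} : e ∈ sep X Y ↔ X e * Y e = -1 := by
  simp [sep]

lemma filter_ne_card_zero {X Y : U → SignType}
    (h : (univ.filter fun e => X e ≠ Y e).card = 0) : X = Y := by
  rw [Finset.card_eq_zero, Finset.filter_eq_empty_iff] at h
  funext e
  by_contra hne
  exact h (mem_univ e) hne

/-- A ⇒ B : in a uniform oriented matroid, everything above a nonzero covector is a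
covector. -/
lemma A_to_B (hom : IsOM L) {r : ℕ} (hU : IsUOMofRank L r) :
    ∀ X ∈ L, X ≠ (0 : U → SignType) → ∀ Y : U → SignType, conf X Y → Y ∈ L := by
  set m := Fintype.card U with hm
  set k := m - r + 1 with hk
  have hsfe : ∀ X : U → SignType, (univ.filter fun e => X e ≠ 0) = suppF X := fun _ => rfl
  have hbound : ∀ V ∈ L, V ≠ (0 : U → SignType) → k ≤ (suppF V).card := by
    intro V hV hV0
    obtain ⟨C, hC, hconf⟩ := exists_cocircuit_conf V hV hV0
    have hcard := hU.1 C hC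
    rw [hsfe] at hcard
    calc k = (suppF C).card := hcard.symm
      _ ≤ _ := card_le_card (suppF_subset_of_conf hconf)
  have hk1 : 1 ≤ k := by omega
  intro X hX hX0 Y hconf
  have main : ∀ (n : ℕ) (X : U → SignType), X ∈ L → X ≠ 0 → conf X Y →
      (univ.filter fun e => X e ≠ Y e).card ≤ n → Y ∈ L := by
    intro n
    induction n with
    | zero =>
      intro X hX _ _ h0
      rw [← filter_ne_card_zero (Nat.le_zero.1 h0)]
      exact hX
    | succ n IH =>
      intro X hX hX0 hconf hcard
      rcases (univ.filter fun e => X e ≠ Y e).eq_empty_or_nonempty with hemp | ⟨e, he⟩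
      · have hXY : X = Y := filter_ne_card_zero (X := X) (Y := Y) (by rw [hemp]; rfl)
        exact hXY ▸ hX
      · have hXYe : X e ≠ Y e := (Finset.mem_filter.1 he).2
        have hXe : X e = 0 := by
          rcases hconf e with h | h
          · exact h
          · exact absurd h hXYe
        have hYe : Y e ≠ 0 := fun h => hXYe (by rw [hXe, h])
        have hkX : k ≤ (suppF X).card := hbound X hX hX0
        obtain ⟨B, hBsub, hBcard⟩ := Finset.exists_subset_card_eq (s := suppF X) (n := k - 1) (by omega)
        have heB : e ∉ B := fun h => (mem_suppF.1 (hBsub h)) hXe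
        have hA'card : (insert e B).card = m - r + 1 := by
          rw [Finset.card_insert_of_notMem heB, hBcard]
          omega
        obtain ⟨C, hC, hCsupp⟩ := hU.2.1 (insert e B) hA'card
        rw [hsfe] at hCsupp
        have hCe : C e ≠ 0 := mem_suppF.1 (by rw [hCsupp]; exact Finset.mem_insert_self e B)
        obtain ⟨C', hC'L, hC'e, hC'supp⟩ :
            ∃ C', C' ∈ L ∧ C' e = Y e ∧ suppF C' = insert e B := by
          rcases eq_or_eq_neg_of_ne_zero (C e) (Y e) hCe hYe with hs | hs
          · exact ⟨C, hC.1, hs, hCsupp⟩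
          · refine ⟨-C, hom.sym C hC.1, ?_, by rw [suppF_neg, hCsupp]⟩
            rw [Pi.neg_apply, hs, neg_neg]
        have hX'L : comp X C' ∈ L := hom.c X hX C' hC'L
        have hX'e : comp X C' e = Y e := by rw [comp_eq_right hXe]; exact hC'e
        have hX'0 : comp X C' ≠ 0 := ne_zero_iff.2 ⟨e, by rw [hX'e]; exact hYe⟩
        have hzero : ∀ f, X f = 0 → f ≠ e → comp X C' f = 0 := by
          intro f hXf hfe
          have hfB : f ∉ insert e B := by
            intro hmem
            rcases Finset.mem_insert.1 hmem with rfl | hfB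
            · exact hfe rfl
            · exact (mem_suppF.1 (hBsub hfB)) hXf
          have hC'f : C' f = 0 := by
            by_contra h
            exact hfB (by rw [← hC'supp]; exact mem_suppF.2 h)
          rw [comp_eq_right hXf, hC'f]
        have hX'conf : conf (comp X C') Y := by
          intro f
          by_cases hXf : X f = 0
          · by_cases hfe : f = e
            · subst hfe; exact Or.inr hX'e
            · exact Or.inl (hzero f hXf hfe)
          · exact Or.inr (by rw [comp_eq_left hXf]; exact conf_eq_of_ne_zero hconf hXf)
        have hdiff : (univ.filter fun f => comp X C' f ≠ Y f) ⊆
            (univ.filter fun f => X f ≠ Y f).erase e := by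
          intro f hf
          have hf' : comp X C' f ≠ Y f := (Finset.mem_filter.1 hf).2
          rw [Finset.mem_erase]
          constructor
          · rintro rfl; exact hf' hX'e
          · rw [Finset.mem_filter]
            refine ⟨mem_univ f, ?_⟩
            intro hXY
            by_cases hXf : X f = 0
            · by_cases hfe : f = e
              · subst hfe; exact hf' hX'e
              · exact hf' (by rw [hzero f hXf hfe, ← hXY, hXf])
            · exact hf' (by rw [comp_eq_left hXf, hXY])
        have hcard' : (univ.filter fun f => comp X C' f ≠ Y f).card ≤ n := by
          have h1 := Finset.card_le_card hdiff
          rw [Finset.card_erase_of_mem he] at h1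
          omega
        exact IH (comp X C') hX'L hX'0 hX'conf hcard'
  exact main _ X hX hX0 hconf le_rfl

/-- Support exchange for minimal-support covectors, assuming cube faces. -/
lemma exchange (hom : IsOM L)
    (hB : ∀ X ∈ L, X ≠ (0 : U → SignType) → ∀ Y : U → SignType, conf X Y → Y ∈ L)
    {k : ℕ} (hmin : ∀ V ∈ L, V ≠ (0 : U → SignType) → k ≤ (suppF V).card)
    {Y : U → SignType} (hY : Y ∈ L) (hY0 : Y ≠ 0) (hYk : (suppF Y).card = k)
    {e f : U} (he : e ∈ suppF Y) (hf : f ∉ suppF Y) :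
    ∃ V ∈ L, V ≠ (0 : U → SignType) ∧ suppF V = insert f ((suppF Y).erase e) := by
  have hfY : Y f = 0 := by
    by_contra h; exact hf (mem_suppF.2 h)
  have hef : e ≠ f := fun h => hf (h ▸ he)
  set Wp : U → SignType := fun u => if u = f then 1 else Y u with hWp
  set Wm : U → SignType := fun u => if u = f then 1 else -Y u with hWm
  have hWpL : Wp ∈ L := by
    apply hB Y hY hY0
    intro u
    by_cases h : u = f
    · subst h; exact Or.inl hfY
    · exact Or.inr (by simp [hWp, h])
  have hWmL : Wm ∈ L := by
    apply hB (-Y) (hom.sym Y hY) (neg_ne_zero_vec hY0)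
    intro u
    by_cases h : u = f
    · subst h; exact Or.inl (by rw [Pi.neg_apply, hfY]; rfl)
    · exact Or.inr (by simp [hWm, h])
  have hYe : Y e ≠ 0 := mem_suppF.1 he
  have hprod : Wp e * Wm e = -1 := by
    simp only [hWp, hWm, if_neg hef]
    exact mul_self_neg_one _ hYe
  obtain ⟨V, hV, hVe, hVf⟩ := hom.se Wp hWpL Wm hWmL e hprod
  have hVfval : V f = 1 := by
    have h1 : Wp f = Wm f := by simp [hWp, hWm]
    rw [hVf f (sq_ne_neg_one _ _ h1), comp_eq_of_eq h1]
    simp [hWp]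
  have hVzero : ∀ u, u ∉ suppF Y → u ≠ f → V u = 0 := by
    intro u hu huf
    have hYu : Y u = 0 := by by_contra h; exact hu (mem_suppF.2 h)
    have h1 : Wp u = Wm u := by simp [hWp, hWm, huf, hYu]
    rw [hVf u (sq_ne_neg_one _ _ h1), comp_eq_of_eq h1]
    simp [hWp, huf, hYu]
  have hV0 : V ≠ 0 := ne_zero_iff.2 ⟨f, by rw [hVfval]; exact one_ne_zero⟩
  have hsub : suppF V ⊆ insert f ((suppF Y).erase e) := by
    intro u hu
    have hVu : V u ≠ 0 := mem_suppF.1 hu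
    by_cases huf : u = f
    · subst huf; exact Finset.mem_insert_self _ _
    · apply Finset.mem_insert_of_mem
      rw [Finset.mem_erase]
      constructor
      · rintro rfl; exact hVu hVe
      · by_contra h
        exact hVu (hVzero u h huf)
  have hcardins : (insert f ((suppF Y).erase e)).card = k := by
    rw [Finset.card_insert_of_notMem (fun h => hf (Finset.mem_of_mem_erase h)),
      Finset.card_erase_of_mem he, hYk]
    have : 1 ≤ k := hYk ▸ Finset.card_pos.2 ⟨e, he⟩
    omega
  have hVk := hmin V hV hV0
  refine ⟨V, hV, hV0, Finset.eq_of_subset_of_card_le hsub ?_⟩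
  rw [hcardins]
  exact hVk

/-- Every `k`-set is a support of some minimal covector. -/
lemma all_ksets (hom : IsOM L)
    (hB : ∀ X ∈ L, X ≠ (0 : U → SignType) → ∀ Y : U → SignType, conf X Y → Y ∈ L)
    {k : ℕ} (hmin : ∀ V ∈ L, V ≠ (0 : U → SignType) → k ≤ (suppF V).card)
    {Y0 : U → SignType} (hY0L : Y0 ∈ L) (hY00 : Y0 ≠ 0) (hY0k : (suppF Y0).card = k) :
    ∀ A : Finset U, A.card = k → ∃ V ∈ L, V ≠ (0 : U → SignType) ∧ suppF V = A := by
  intro A hA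
  have main : ∀ (n : ℕ) (Y : U → SignType), Y ∈ L → Y ≠ 0 → (suppF Y).card = k →
      (A \ suppF Y).card ≤ n → ∃ V ∈ L, V ≠ (0 : U → SignType) ∧ suppF V = A := by
    intro n
    induction n with
    | zero =>
      intro Y hY hY0 hYk h0
      have hsub : A ⊆ suppF Y :=
        Finset.sdiff_eq_empty_iff_subset.1 (Finset.card_eq_zero.1 (Nat.le_zero.1 h0))
      have : A = suppF Y := Finset.eq_of_subset_of_card_le hsub (by rw [hA, hYk])
      exact ⟨Y, hY, hY0, this.symm⟩
    | succ n IH =>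
      intro Y hY hY0 hYk hcard
      rcases (A \ suppF Y).eq_empty_or_nonempty with hemp | ⟨f, hfmem⟩
      · have hsub : A ⊆ suppF Y := Finset.sdiff_eq_empty_iff_subset.1 hemp
        have : A = suppF Y := Finset.eq_of_subset_of_card_le hsub (by rw [hA, hYk])
        exact ⟨Y, hY, hY0, this.symm⟩
      · have hfA : f ∈ A := (Finset.mem_sdiff.1 hfmem).1
        have hfY : f ∉ suppF Y := (Finset.mem_sdiff.1 hfmem).2
        have hSA : (suppF Y \ A).Nonempty := by
          rw [← Finset.card_pos]
          have e1 := Finset.card_sdiff_add_card_inter (suppF Y) A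
          have e2 := Finset.card_sdiff_add_card_inter A (suppF Y)
          rw [Finset.inter_comm] at e2
          have e3 : 0 < (A \ suppF Y).card := Finset.card_pos.2 ⟨f, hfmem⟩
          omega
        obtain ⟨e, hemem⟩ := hSA
        have heY : e ∈ suppF Y := (Finset.mem_sdiff.1 hemem).1
        have heA : e ∉ A := (Finset.mem_sdiff.1 hemem).2
        obtain ⟨V, hV, hV0, hVsupp⟩ := exchange hom hB hmin hY hY0 hYk heY hfY
        have hVk : (suppF V).card = k := by
          rw [hVsupp, Finset.card_insert_of_notMem (fun h => hfY (Finset.mem_of_mem_erase h)),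
            Finset.card_erase_of_mem heY, hYk]
          have : 1 ≤ k := hYk ▸ Finset.card_pos.2 ⟨e, heY⟩
          omega
        have hdiff : A \ suppF V ⊆ (A \ suppF Y).erase f := by
          intro u hu
          have huA : u ∈ A := (Finset.mem_sdiff.1 hu).1
          have huV : u ∉ suppF V := (Finset.mem_sdiff.1 hu).2
          rw [hVsupp] at huV
          rw [Finset.mem_erase]
          constructor
          · rintro rfl; exact huV (Finset.mem_insert_self _ _)
          · rw [Finset.mem_sdiff]
            refine ⟨huA, fun huY => ?_⟩
            have hue : u ≠ e := fun h => heA (h ▸ huA)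
            exact huV (Finset.mem_insert_of_mem (Finset.mem_erase.2 ⟨hue, huY⟩))
        have hcard' : (A \ suppF V).card ≤ n := by
          have h1 := Finset.card_le_card hdiff
          rw [Finset.card_erase_of_mem hfmem] at h1
          omega
        exact IH V hV hV0 hVk hcard'
  exact main (A \ suppF Y0).card Y0 hY0L hY00 hY0k le_rfl

lemma noconf_cascade (hom : IsOM L) {X : U → SignType} (hX : Cocircuit L X)
    {W : U → SignType} (hW : W ∈ L) (hW0 : W ≠ 0) (hWX : W ≠ X)
    (hWsub : suppF W ⊆ suppF X) (hsep : sep X W = ∅) : False := by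
  apply hWX
  apply hX.2.2 W hW hW0
  intro u
  by_cases hWu : W u = 0
  · exact Or.inl hWu
  · right
    have hXu : X u ≠ 0 := mem_suppF.1 (hWsub (mem_suppF.2 hWu))
    have hns : X u * W u ≠ -1 := by
      intro h
      have : u ∈ sep X W := mem_sep.2 h
      rw [hsep] at this
      simp at this
    exact eq_of_ne_zero_not_conf _ _ hXu hWu hns

/-- All cocircuits have support of the minimal size `k`. -/
lemma cocircuit_card (hom : IsOM L)
    {k : ℕ} (hmin : ∀ V ∈ L, V ≠ (0 : U → SignType) → k ≤ (suppF V).card)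
    (hallk : ∀ A : Finset U, A.card = k → ∃ V ∈ L, V ≠ (0 : U → SignType) ∧ suppF V = A)
    {X : U → SignType} (hX : Cocircuit L X) : (suppF X).card = k := by
  have hkle : k ≤ (suppF X).card := hmin X hX.1 hX.2.1
  by_contra hne
  have hlt : k < (suppF X).card := lt_of_le_of_ne hkle (fun h => hne h.symm)
  obtain ⟨A', hA'sub, hA'card⟩ := Finset.exists_subset_card_eq (s := suppF X) (n := k) (le_of_lt hlt)
  obtain ⟨Y', hY'L, hY'0, hY'supp⟩ := hallk A' hA'card
  have hwit : ∃ u, u ∈ suppF X ∧ u ∉ A' := by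
    by_contra h
    push_neg at h
    have hsub : suppF X ⊆ A' := fun u hu => h u hu
    have := Finset.card_le_card hsub
    omega
  obtain ⟨w, hwX, hwA⟩ := hwit
  have cascade : ∀ (n : ℕ) (W : U → SignType), W ∈ L → W ≠ 0 → W ≠ X →
      suppF W ⊆ suppF X → sep X W ⊆ A' → (sep X W).card ≤ n → False := by
    intro n
    induction n with
    | zero =>
      intro W hW hW0 hWX hWsub hsepA h0
      exact noconf_cascade hom hX hW hW0 hWX hWsub
        (Finset.card_eq_zero.1 (Nat.le_zero.1 h0))
    | succ n IH =>
      intro W hW hW0 hWX hWsub hsepA hcard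
      rcases (sep X W).eq_empty_or_nonempty with hemp | ⟨e, hesep⟩
      · exact noconf_cascade hom hX hW hW0 hWX hWsub hemp
      · have hXWe : X e * W e = -1 := mem_sep.1 hesep
        have hXe : X e ≠ 0 := (nonzero_of_mul_neg_one hXWe).1
        obtain ⟨V, hV, hVe, hVf⟩ := hom.se X hX.1 W hW e hXWe
        have hVcomp : ∀ u, u ∉ sep X W → V u = comp X W u := by
          intro u hu
          exact hVf u (fun h => hu (mem_sep.2 h))
        have hVsub : suppF V ⊆ suppF X := by
          intro u hu
          have hVu : V u ≠ 0 := mem_suppF.1 hu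
          by_contra hXu
          have hXu0 : X u = 0 := by
            by_contra h; exact hXu (mem_suppF.2 h)
          have hWu0 : W u = 0 := by
            by_contra h; exact hXu (hWsub (mem_suppF.2 h))
          have : u ∉ sep X W := by
            rw [mem_sep, hXu0]
            simp
          rw [hVcomp u this, comp_eq_right hXu0] at hVu
          exact hVu hWu0
        have hsepV : sep X V ⊆ (sep X W).erase e := by
          intro u hu
          have hXVu : X u * V u = -1 := mem_sep.1 hu
          rw [Finset.mem_erase]
          constructor
          · rintro rfl
            rw [hVe, mul_zero] at hXVu
            exact absurd hXVu (by decide)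
          · by_contra h
            have hXu : X u ≠ 0 := (nonzero_of_mul_neg_one hXVu).1
            rw [hVcomp u h, comp_eq_left hXu] at hXVu
            exact sq_ne_neg_one _ _ rfl hXVu
        have hV0 : V ≠ 0 := by
          have hwsep : w ∉ sep X W := fun h => hwA (hsepA h)
          have hXw : X w ≠ 0 := mem_suppF.1 hwX
          exact ne_zero_iff.2 ⟨w, by rw [hVcomp w hwsep, comp_eq_left hXw]; exact hXw⟩
        have hVX : V ≠ X := by
          intro h
          rw [h] at hVe
          exact hXe hVe
        apply IH V hV hV0 hVX hVsub
          (fun u hu => hsepA (Finset.mem_of_mem_erase (hsepV hu)))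
        have h1 := Finset.card_le_card hsepV
        rw [Finset.card_erase_of_mem hesep] at h1
        omega
  apply cascade (sep X Y').card Y' hY'L hY'0 ?_ ?_ ?_ le_rfl
  · intro h
    rw [h] at hY'supp
    rw [← hY'supp] at hA'card
    omega
  · rw [hY'supp]; exact hA'sub
  · intro u hu
    have : Y' u ≠ 0 := (nonzero_of_mul_neg_one (mem_sep.1 hu)).2
    rw [← hY'supp]
    exact mem_suppF.2 this

lemma cocircuit_of_min {k : ℕ}
    (hmin : ∀ V ∈ L, V ≠ (0 : U → SignType) → k ≤ (suppF V).card)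
    {V : U → SignType} (hV : V ∈ L) (hV0 : V ≠ (0 : U → SignType))
    (hVk : (suppF V).card = k) : Cocircuit L V := by
  refine ⟨hV, hV0, ?_⟩
  intro W hW hW0 hconf
  have hconf' : conf W V := hconf
  have hsub := suppF_subset_of_conf hconf'
  have hk := hmin W hW hW0
  have hseq : suppF W = suppF V :=
    Finset.eq_of_subset_of_card_le hsub (by rw [hVk]; exact hk)
  exact eq_of_conf_of_suppF_eq hconf' hseq

lemma pm_unique (hom : IsOM L) {k : ℕ} (hk1 : 1 ≤ k)
    (hmin : ∀ V ∈ L, V ≠ (0 : U → SignType) → k ≤ (suppF V).card)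
    {X Y : U → SignType} (hX : Cocircuit L X) (hY : Cocircuit L Y)
    (hXk : (suppF X).card = k)
    (hsupp : ∀ e, X e ≠ 0 ↔ Y e ≠ 0) : Y = X ∨ Y = -X := by
  by_cases hsep0 : sep X Y = ∅
  · left
    apply hX.2.2 Y hY.1 hY.2.1
    intro u
    by_cases hYu : Y u = 0
    · exact Or.inl hYu
    · right
      have hXu : X u ≠ 0 := (hsupp u).2 hYu
      have hns : X u * Y u ≠ -1 := by
        intro h
        have : u ∈ sep X Y := mem_sep.2 h
        rw [hsep0] at this
        simp at this
      exact eq_of_ne_zero_not_conf _ _ hXu hYu hns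
  · by_cases hall : ∀ u ∈ suppF X, u ∈ sep X Y
    · right
      funext u
      by_cases hXu : X u = 0
      · have hYu : Y u = 0 := by
          by_contra h
          exact (hsupp u).2 h hXu
        rw [Pi.neg_apply, hXu, hYu]
        rfl
      · have := mem_sep.1 (hall u (mem_suppF.2 hXu))
        rw [Pi.neg_apply]
        exact neg_of_mul_neg_one _ _ this
    · push_neg at hall
      obtain ⟨g, hgX, hgsep⟩ := hall
      obtain ⟨e, hesep⟩ := Finset.nonempty_iff_ne_empty.2 hsep0
      have hXYe := mem_sep.1 hesep
      obtain ⟨V, hV, hVe, hVf⟩ := hom.se X hX.1 Y hY.1 e hXYe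
      have hXg : X g ≠ 0 := mem_suppF.1 hgX
      have hVg : V g = X g := by
        rw [hVf g (fun h => hgsep (mem_sep.2 h)), comp_eq_left hXg]
      have hV0 : V ≠ 0 := ne_zero_iff.2 ⟨g, by rw [hVg]; exact hXg⟩
      have hVsub : suppF V ⊆ (suppF X).erase e := by
        intro u hu
        have hVu : V u ≠ 0 := mem_suppF.1 hu
        rw [Finset.mem_erase]
        constructor
        · rintro rfl; exact hVu hVe
        · rw [mem_suppF]
          by_contra hXu
          have hXu0 : X u = 0 := hXu
          have hYu0 : Y u = 0 := by
            by_contra h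
            exact (hsupp u).2 h hXu
          have hns : u ∉ sep X Y := by
            rw [mem_sep, hXu0]
            simp
          rw [hVf u (fun h => hns (mem_sep.2 h)), comp_eq_right hXu0] at hVu
          exact hVu hYu0
      have hkV := hmin V hV hV0
      have hcard := Finset.card_le_card hVsub
      have heX : e ∈ suppF X := mem_suppF.2 (nonzero_of_mul_neg_one hXYe).1
      rw [Finset.card_erase_of_mem heX, hXk] at hcard
      omega

lemma uom_of_isEmpty (h : IsEmpty U) : IsUOMofRank L 0 := by
  refine ⟨?_, ?_, ?_⟩
  · intro X hC
    exact absurd (funext fun e => h.elim e) hC.2.1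
  · intro A hA
    have h0 : Fintype.card U = 0 := by simp
    have hle : A.card ≤ 0 := h0 ▸ Finset.card_le_univ A
    omega
  · intro X Y hX _ _
    exact absurd (funext fun e => h.elim e) hX.2.1

/-- B ⇒ A. -/
lemma B_to_A (hom : IsOM L) (hsimple : SimpleSV L)
    (hB : ∀ X ∈ L, X ≠ (0 : U → SignType) → ∀ Y : U → SignType, conf X Y → Y ∈ L) :
    ∃ r, IsUOMofRank L r := by
  rcases isEmpty_or_nonempty U with hU | hU
  · exact ⟨0, uom_of_isEmpty hU⟩
  obtain ⟨e0⟩ := hU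
  obtain ⟨X0, hX0L, hX0e⟩ := hsimple.1 e0 1
  have hX00 : X0 ≠ 0 := ne_zero_iff.2 ⟨e0, by rw [hX0e]; exact one_ne_zero⟩
  classical
  set F : Finset (U → SignType) := univ.filter (fun Y => Y ∈ L ∧ Y ≠ 0) with hF
  have hX0F : X0 ∈ F := by
    simp only [hF, Finset.mem_filter, Finset.mem_univ, true_and]
    exact ⟨hX0L, hX00⟩
  obtain ⟨Y0, hY0F, hY0min⟩ := F.exists_min_image (fun Y => (suppF Y).card) ⟨X0, hX0F⟩
  simp only [hF, Finset.mem_filter, Finset.mem_univ, true_and] at hY0F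
  set k := (suppF Y0).card with hk
  have hmin : ∀ V ∈ L, V ≠ (0 : U → SignType) → k ≤ (suppF V).card := by
    intro V hV hV0
    apply hY0min
    simp only [hF, Finset.mem_filter, Finset.mem_univ, true_and]
    exact ⟨hV, hV0⟩
  have hk1 : 1 ≤ k := Finset.card_pos.2 (suppF_nonempty_of_ne_zero hY0F.2)
  have hkm : k ≤ Fintype.card U := by rw [hk]; exact Finset.card_le_univ _
  have hallk := all_ksets hom hB hmin hY0F.1 hY0F.2 rfl
  refine ⟨Fintype.card U - k + 1, ?_, ?_, ?_⟩
  · intro X hX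
    have hmr : Fintype.card U - (Fintype.card U - k + 1) + 1 = k := by omega
    rw [hmr]
    exact cocircuit_card hom hmin hallk hX
  · intro A hA
    have hmr : Fintype.card U - (Fintype.card U - k + 1) + 1 = k := by omega
    rw [hmr] at hA
    obtain ⟨V, hV, hV0, hVsupp⟩ := hallk A hA
    exact ⟨V, cocircuit_of_min hmin hV hV0 (by rw [hVsupp, hA]), hVsupp⟩
  · intro X Y hX hY hsupp
    exact pm_unique hom hk1 hmin hX hY (cocircuit_card hom hmin hallk hX) hsupp

lemma sv_tb {X : U → SignType} {e : U} (h : X e ≠ 0) : sv (tb X) e = X e := by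
  rcases sign_cases (X e) with h0 | h1 | hm
  · exact absurd h0 h
  · simp [sv, tb, h1, bs]
  · simp [sv, tb, hm, bs]

lemma tb_sv (v : U → Bool) : tb (sv v) = v := by
  funext e
  cases h : v e <;> simp [tb, sv, h, bs]

lemma tb_bs (b : Bool) : decide (bs b = 1) = b := by cases b <;> rfl

lemma sv_ne_zero (v : U → Bool) (e : U) : sv v e ≠ 0 := bs_ne_zero _

lemma mem_TopeSet {v : U → Bool} : v ∈ TopeSet L ↔ sv v ∈ L := by
  constructor
  · rintro ⟨T, ⟨hT, hfull⟩, rfl⟩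
    have : sv (tb T) = T := funext fun u => sv_tb (hfull u)
    rw [this]
    exact hT
  · intro h
    exact ⟨sv v, ⟨h, fun u => sv_ne_zero v u⟩, tb_sv v⟩

lemma supp_card_bound {r : ℕ} (hU : IsUOMofRank L r) :
    ∀ V ∈ L, V ≠ (0 : U → SignType) → Fintype.card U - r + 1 ≤ (suppF V).card := by
  intro V hV hV0
  obtain ⟨C, hC, hconf⟩ := exists_cocircuit_conf V hV hV0
  have hcard := hU.1 C hC
  have hsfe : (univ.filter fun e => C e ≠ 0) = suppF C := rfl
  rw [hsfe] at hcard
  calc Fintype.card U - r + 1 = (suppF C).card := hcard.symm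
    _ ≤ _ := card_le_card (suppF_subset_of_conf hconf)

/-- A ⇒ halfspaces are ample. -/
lemma A_to_ample (hom : IsOM L) (hsimple : SimpleSV L) {r : ℕ} (hU : IsUOMofRank L r)
    (e : U) (b : Bool) : IsAmple (TopeSet L ∩ {f | f e = b}) := by
  intro X0 hshat
  set m := Fintype.card U with hm
  set k := m - r + 1 with hkdef
  have hB := A_to_B hom hU
  have hbound : ∀ V ∈ L, V ≠ (0 : U → SignType) → k ≤ (suppF V).card := supp_card_bound hU
  have hk1 : 1 ≤ k := by omega
  have hm1 : 1 ≤ m := by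
    rw [hm]
    exact Fintype.card_pos_iff.2 ⟨e⟩
  have hkm : k ≤ m := by
    obtain ⟨W, hW, hWe⟩ := hsimple.1 e 1
    have hW0 : W ≠ 0 := ne_zero_iff.2 ⟨e, by rw [hWe]; exact one_ne_zero⟩
    obtain ⟨C, hC, _⟩ := exists_cocircuit_conf W hW hW0
    have hcard := hU.1 C hC
    have hsfe : (univ.filter fun u => C u ≠ 0) = suppF C := rfl
    rw [hsfe] at hcard
    calc k = (suppF C).card := hcard.symm
      _ ≤ m := Finset.card_le_univ _
  -- e is not in the shattered set
  have heX0 : e ∉ X0 := by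
    intro hmem
    obtain ⟨a, ha, hag⟩ := hshat (fun _ => !b)
    have h1 : a e = b := ha.2
    have h2 : a e = !b := hag e hmem
    rw [h1] at h2
    cases b <;> simp at h2
  -- bound on the size of a shattered set
  have hcardX0 : X0.card ≤ m - k := by
    by_contra hbig
    push_neg at hbig
    obtain ⟨X1, hX1sub, hX1card⟩ := Finset.exists_subset_card_eq (s := X0) (n := m - k + 1) (by omega)
    have hdisj : Disjoint X1 {e} := by
      rw [Finset.disjoint_right]
      intro u hu
      rw [Finset.mem_singleton] at hu
      subst hu
      exact fun h => heX0 (hX1sub h)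
    have hfam : ∀ g : U → Bool, ∃ Z ∈ L, (∀ x ∈ X1, Z x = bs (g x)) ∧
        (∀ y ∈ ({e} : Finset U), Z y = bs b) := by
      intro g
      obtain ⟨a, ha, hag⟩ := hshat g
      refine ⟨sv a, mem_TopeSet.1 ha.1, ?_, ?_⟩
      · intro x hx
        rw [show sv a x = bs (a x) from rfl, hag x (hX1sub hx)]
      · intro y hy
        rw [Finset.mem_singleton] at hy
        subst hy
        have hab : a y = b := ha.2
        rw [show sv a y = bs (a y) from rfl, hab]
    obtain ⟨V, hV, hVS, hVK⟩ := elim_family hom.se X1 {e} hdisj (fun _ => bs b) hfam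
    have hVe : V e = bs b := hVK e (Finset.mem_singleton_self e)
    have hV0 : V ≠ 0 := ne_zero_iff.2 ⟨e, by rw [hVe]; exact bs_ne_zero b⟩
    have hdisj2 : Disjoint (suppF V) X1 := by
      rw [Finset.disjoint_right]
      intro u hu
      rw [mem_suppF]
      intro h
      exact h (hVS u hu)
    have hun : (suppF V).card + X1.card ≤ m := by
      rw [← Finset.card_union_of_disjoint hdisj2]
      exact Finset.card_le_univ _
    have := hbound V hV hV0
    omega
  -- now strong shattering
  have hX0sub : X0 ⊆ univ.erase e := by
    intro u hu
    rw [Finset.mem_erase]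
    exact ⟨fun h => heX0 (h ▸ hu), mem_univ u⟩
  obtain ⟨X2, hX2sup, hX2sub, hX2card⟩ :=
    Finset.exists_subsuperset_card_eq hX0sub (n := m - k)
      (by omega) (by rw [Finset.card_erase_of_mem (mem_univ e), Finset.card_univ]; omega)
  have heX2 : e ∉ X2 := fun h => (Finset.mem_erase.1 (hX2sub h)).1 rfl
  have hDcard : (X2ᶜ).card = m - r + 1 := by
    rw [Finset.card_compl, hX2card]
    omega
  obtain ⟨C, hC, hCsupp⟩ := hU.2.1 X2ᶜ hDcard
  have hsfe : (univ.filter fun u => C u ≠ 0) = suppF C := rfl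
  rw [hsfe] at hCsupp
  have heD : e ∈ X2ᶜ := Finset.mem_compl.2 heX2
  have hCe : C e ≠ 0 := mem_suppF.1 (by rw [hCsupp]; exact heD)
  obtain ⟨C', hC'L, hC'e, hC'supp⟩ :
      ∃ C', C' ∈ L ∧ C' e = bs b ∧ suppF C' = X2ᶜ := by
    rcases eq_or_eq_neg_of_ne_zero (C e) (bs b) hCe (bs_ne_zero b) with hs | hs
    · exact ⟨C, hC.1, hs, hCsupp⟩
    · refine ⟨-C, hom.sym C hC.1, ?_, by rw [suppF_neg, hCsupp]⟩
      rw [Pi.neg_apply, hs, neg_neg]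
  obtain ⟨T0, hT0L, hT0conf, hT0full⟩ := exists_tope_above hom.c hsimple.1 C' hC'L
  refine ⟨tb T0, ?_⟩
  intro g
  set vg : U → Bool := fun i => if i ∈ X0 then g i else tb T0 i with hvg
  have hsvg : sv vg ∈ L := by
    apply hB C' hC'L (ne_zero_iff.2 ⟨e, by rw [hC'e]; exact bs_ne_zero b⟩)
    intro u
    by_cases hu : u ∈ X2
    · left
      by_contra h
      exact (Finset.mem_compl.1 (hC'supp ▸ mem_suppF.2 h)) hu
    · right
      have hC'u : C' u ≠ 0 := mem_suppF.1 (by rw [hC'supp]; exact Finset.mem_compl.2 hu)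
      have h1 : C' u = T0 u := conf_eq_of_ne_zero hT0conf hC'u
      have huX0 : u ∉ X0 := fun h => hu (hX2sup h)
      have h2 : sv vg u = sv (tb T0) u := by simp [hvg, sv, huX0]
      rw [h2, sv_tb (hT0full u), h1]
  constructor
  · exact mem_TopeSet.2 hsvg
  · show vg e = b
    have : vg e = tb T0 e := by simp [hvg, heX0]
    rw [this]
    show decide (T0 e = 1) = b
    rw [← conf_eq_of_ne_zero hT0conf (by rw [hC'e]; exact bs_ne_zero b), hC'e]
    exact tb_bs b

lemma hDist_self (x : U → Bool) : hDist x x = 0 := by simp [hDist]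

lemma hDist_eq_zero {x y : U → Bool} (h : hDist x y = 0) : x = y := by
  rw [hDist, Finset.card_eq_zero, Finset.filter_eq_empty_iff] at h
  funext u
  have := h (mem_univ u)
  simpa using this

lemma hDist_triangle (x y z : U → Bool) : hDist x z ≤ hDist x y + hDist y z := by
  rw [hDist, hDist, hDist]
  calc (univ.filter fun i => x i ≠ z i).card
      ≤ ((univ.filter fun i => x i ≠ y i) ∪ (univ.filter fun i => y i ≠ z i)).card := by
        apply Finset.card_le_card
        intro u hu
        simp only [Finset.mem_filter, Finset.mem_univ, true_and, Finset.mem_union] at *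
        by_contra h
        push_neg at h
        rw [h.1, h.2] at hu
        exact hu rfl
    _ ≤ _ := Finset.card_union_le _ _

lemma sep_tb {T T' : U → SignType} (hT : ∀ u, T u ≠ 0) (hT' : ∀ u, T' u ≠ 0) :
    sep T T' = univ.filter fun u => tb T u ≠ tb T' u := by
  apply Finset.filter_congr
  intro u _
  constructor
  · intro h
    rcases sign_cases (T u) with h0 | h1 | hm <;> rcases sign_cases (T' u) with g0 | g1 | gm <;>
      simp_all [tb] <;> revert h <;> decide
  · intro h
    apply mul_neg_one_of_ne _ _ (hT u) (hT' u)
    intro heq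
    exact h (by rw [tb, tb, heq])

lemma hDist_sep {T T' : U → SignType} (hT : ∀ u, T u ≠ 0) (hT' : ∀ u, T' u ≠ 0) :
    hDist (tb T) (tb T') = (sep T T').card := by
  rw [hDist, sep_tb hT hT']

lemma eq_of_sep_empty {T T' : U → SignType} (hT : ∀ u, T u ≠ 0) (hT' : ∀ u, T' u ≠ 0)
    (h : sep T T' = ∅) : T = T' := by
  funext u
  have : u ∉ sep T T' := by rw [h]; simp
  rw [mem_sep] at this
  exact (eq_of_ne_zero_not_conf _ _ (hT u) (hT' u) this).symm

lemma tb_eq_of_eq {T T' : U → SignType} (hT : ∀ u, T u ≠ 0) (h : T = T') : tb T = tb T' := by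
  rw [h]

lemma bs_of_tb {T : U → SignType} {e : U} {b : Bool} (h0 : T e ≠ 0) (h : tb T e = b) :
    T e = bs b := by
  rw [← sv_tb h0, show sv (tb T) e = bs (tb T e) from rfl, h]

lemma walk_ge {A : Set (U → Bool)} :
    ∀ {x y : ↥A} (p : ((cubeGraph U).induce A).Walk x y), hDist x.val y.val ≤ p.length := by
  intro x y p
  induction p with
  | nil => simp [hDist_self]
  | @cons u v w h p IH =>
    have hadj : (cubeGraph U).Adj u.val v.val := h
    have h1 : hDist u.val v.val = 1 := hadj
    calc hDist u.val w.val ≤ hDist u.val v.val + hDist v.val w.val := hDist_triangle _ _ _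
      _ ≤ 1 + p.length := by rw [h1]; omega
      _ = (SimpleGraph.Walk.cons h p).length := by rw [SimpleGraph.Walk.length_cons]; omega

lemma tope_mem {e : U} {b : Bool} {T : U → SignType} (hT : T ∈ L) (hTf : ∀ u, T u ≠ 0)
    (hTe : T e = bs b) : tb T ∈ TopeSet L ∩ {f | f e = b} := by
  refine ⟨⟨T, ⟨hT, hTf⟩, rfl⟩, ?_⟩
  show decide (T e = 1) = b
  rw [hTe]
  exact tb_bs b

lemma nil_walk {A : Set (U → Bool)} {T T' : U → SignType}
    (hTf : ∀ u, T u ≠ 0) (hT'f : ∀ u, T' u ≠ 0) (hemp : sep T T' = ∅)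
    (hx : tb T ∈ A) (hy : tb T' ∈ A) :
    ∃ p : ((cubeGraph U).induce A).Walk ⟨tb T, hx⟩ ⟨tb T', hy⟩,
      p.length = (sep T T').card := by
  have hTT' : T = T' := eq_of_sep_empty hTf hT'f hemp
  have heq : (⟨tb T, hx⟩ : ↥A) = ⟨tb T', hy⟩ := Subtype.ext (show tb T = tb T' by rw [hTT'])
  refine ⟨SimpleGraph.Walk.nil.copy rfl heq, ?_⟩
  rw [SimpleGraph.Walk.length_copy, hemp]
  rfl

lemma cube_walk (hom : IsOM L)
    (hB : ∀ X ∈ L, X ≠ (0 : U → SignType) → ∀ Y : U → SignType, conf X Y → Y ∈ L)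
    {e : U} {b : Bool} {Z : U → SignType} (hZL : Z ∈ L) (hZ0 : Z ≠ 0) :
    ∀ (n : ℕ) (T T' : U → SignType), T ∈ L → T' ∈ L → (∀ u, T u ≠ 0) → (∀ u, T' u ≠ 0) →
      conf Z T → conf Z T' →
      ∀ (hx : tb T ∈ TopeSet L ∩ {f | f e = b}) (hy : tb T' ∈ TopeSet L ∩ {f | f e = b}),
      (sep T T').card ≤ n →
      ∃ p : ((cubeGraph U).induce (TopeSet L ∩ {f | f e = b})).Walk ⟨tb T, hx⟩ ⟨tb T', hy⟩,
        p.length = (sep T T').card := by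
  intro n
  induction n with
  | zero =>
    intro T T' hT hT' hTf hT'f hcT hcT' hx hy hcard
    exact nil_walk hTf hT'f (Finset.card_eq_zero.1 (Nat.le_zero.1 hcard)) hx hy
  | succ n IH =>
    intro T T' hT hT' hTf hT'f hcT hcT' hx hy hcard
    rcases (sep T T').eq_empty_or_nonempty with hemp | ⟨f0, hf0⟩
    · exact nil_walk hTf hT'f hemp hx hy
    · have hprod : T f0 * T' f0 = -1 := mem_sep.1 hf0
      have hZf0 : Z f0 = 0 := by
        rcases hcT f0 with h | h
        · exact h
        · rcases hcT' f0 with h' | h'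
          · exact h'
          · exact absurd hprod (sq_ne_neg_one _ _ (by rw [← h, h']))
      have hef0 : e ≠ f0 := by
        rintro rfl
        have h1 : tb T e = b := hx.2
        have h2 : tb T' e = b := hy.2
        have : tb T e ≠ tb T' e := by
          have := sep_tb hTf hT'f ▸ hf0
          simpa using (Finset.mem_filter.1 this).2
        rw [h1, h2] at this
        exact this rfl
      set T1 : U → SignType := fun u => if u = f0 then T' u else T u with hT1def
      have hT1v : ∀ u, u ≠ f0 → T1 u = T u := by
        intro u h; simp [hT1def, h]
      have hT1f0 : T1 f0 = T' f0 := by simp [hT1def]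
      have hT1L : T1 ∈ L := by
        apply hB Z hZL hZ0
        intro u
        by_cases h : u = f0
        · subst h; exact Or.inl hZf0
        · rcases hcT u with h0 | hv
          · exact Or.inl h0
          · exact Or.inr (by rw [hT1v u h]; exact hv)
      have hT1f : ∀ u, T1 u ≠ 0 := by
        intro u
        by_cases h : u = f0
        · subst h; rw [hT1f0]; exact hT'f u
        · rw [hT1v u h]; exact hTf u
      have hcT1 : conf Z T1 := by
        intro u
        by_cases h : u = f0
        · subst h; exact Or.inl hZf0
        · rcases hcT u with h0 | hv
          · exact Or.inl h0
          · exact Or.inr (by rw [hT1v u h]; exact hv)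
      have hT1e : T1 e = T e := hT1v e hef0
      have hTe : T e = bs b := bs_of_tb (hTf e) hx.2
      have hx1 : tb T1 ∈ TopeSet L ∩ {f | f e = b} :=
        tope_mem hT1L hT1f (by rw [hT1e]; exact hTe)
      have hadj : ((cubeGraph U).induce (TopeSet L ∩ {f | f e = b})).Adj
          ⟨tb T, hx⟩ ⟨tb T1, hx1⟩ := by
        show (cubeGraph U).Adj (tb T) (tb T1)
        show hDist (tb T) (tb T1) = 1
        rw [hDist_sep hTf hT1f]
        have : sep T T1 = {f0} := by
          ext u
          rw [mem_sep, Finset.mem_singleton]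
          constructor
          · intro h
            by_contra hne
            rw [hT1v u hne] at h
            exact sq_ne_neg_one _ _ rfl h
          · rintro rfl
            rw [hT1f0]
            exact hprod
        rw [this]
        rfl
      have hsep1 : sep T1 T' = (sep T T').erase f0 := by
        ext u
        rw [mem_sep, Finset.mem_erase, mem_sep]
        constructor
        · intro h
          constructor
          · rintro rfl
            rw [hT1f0] at h
            exact sq_ne_neg_one _ _ rfl h
          · by_contra hne
            have huf0 : u ≠ f0 := by
              rintro rfl
              rw [hT1f0] at h
              exact sq_ne_neg_one _ _ rfl h
            rw [hT1v u huf0] at h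
            exact hne h
        · rintro ⟨hne, h⟩
          rw [hT1v u hne]
          exact h
      have hcard1 : (sep T1 T').card ≤ n := by
        rw [hsep1, Finset.card_erase_of_mem hf0]
        omega
      obtain ⟨p, hp⟩ := IH T1 T' hT1L hT' hT1f hT'f hcT1 hcT' hx1 hy hcard1
      refine ⟨SimpleGraph.Walk.cons hadj p, ?_⟩
      rw [SimpleGraph.Walk.length_cons, hp, hsep1, Finset.card_erase_of_mem hf0]
      have : 1 ≤ (sep T T').card := Finset.card_pos.2 ⟨f0, hf0⟩
      omega

lemma tope_walk (hom : IsOM L)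
    (hB : ∀ X ∈ L, X ≠ (0 : U → SignType) → ∀ Y : U → SignType, conf X Y → Y ∈ L)
    (e : U) (b : Bool) :
    ∀ (n : ℕ) (T T' : U → SignType), T ∈ L → T' ∈ L → (∀ u, T u ≠ 0) → (∀ u, T' u ≠ 0) →
      T e = bs b → T' e = bs b →
      ∀ (hx : tb T ∈ TopeSet L ∩ {f | f e = b}) (hy : tb T' ∈ TopeSet L ∩ {f | f e = b}),
      (sep T T').card ≤ n →
      ∃ p : ((cubeGraph U).induce (TopeSet L ∩ {f | f e = b})).Walk ⟨tb T, hx⟩ ⟨tb T', hy⟩,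
        p.length = (sep T T').card := by
  intro n
  induction n using Nat.strong_induction_on with
  | _ n IH =>
  intro T T' hT hT' hTf hT'f hTe hT'e hx hy hcard
  rcases (sep T T').eq_empty_or_nonempty with hemp | ⟨f0, hf0⟩
  · exact nil_walk hTf hT'f hemp hx hy
  · have hprod : T f0 * T' f0 = -1 := mem_sep.1 hf0
    obtain ⟨Z, hZL, hZf0, hZg⟩ := hom.se T hT T' hT' f0 hprod
    have hoff : ∀ u, u ∉ sep T T' → Z u = T u := by
      intro u hu
      have hns : T u * T' u ≠ -1 := fun h => hu (mem_sep.2 h)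
      rw [hZg u hns, comp_eq_left (hTf u)]
    have hoffeq : ∀ u, u ∉ sep T T' → T' u = T u := by
      intro u hu
      exact eq_of_ne_zero_not_conf _ _ (hTf u) (hT'f u) (fun h => hu (mem_sep.2 h))
    have heS : e ∉ sep T T' := by
      rw [mem_sep, hTe, hT'e]
      exact sq_ne_neg_one _ _ rfl
    have hZe : Z e = bs b := by rw [hoff e heS, hTe]
    have hZ0 : Z ≠ 0 := ne_zero_iff.2 ⟨e, by rw [hZe]; exact bs_ne_zero b⟩
    have hT'neg : ∀ u ∈ sep T T', T' u = -T u := by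
      intro u hu
      exact neg_of_mul_neg_one _ _ (mem_sep.1 hu)
    have hncard : 1 ≤ (sep T T').card := Finset.card_pos.2 ⟨f0, hf0⟩
    by_cases hSpne : ((sep T T').filter (fun u => Z u = T u)).Nonempty
    · -- T1 := comp Z T'
      set Sp := (sep T T').filter (fun u => Z u = T u) with hSpdef
      set T1 := comp Z T' with hT1def
      have hT1L : T1 ∈ L := hom.c Z hZL T' hT'
      have hT1f : ∀ u, T1 u ≠ 0 := by
        intro u
        by_cases h : Z u = 0
        · rw [hT1def, comp_eq_right h]; exact hT'f u
        · rw [hT1def, comp_eq_left h]; exact h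
      have hT1out : ∀ u, u ∉ sep T T' → T1 u = T u := by
        intro u hu
        have hZu : Z u = T u := hoff u hu
        rw [hT1def, comp_eq_left (by rw [hZu]; exact hTf u), hZu]
      have hT1Sp : ∀ u ∈ Sp, T1 u = T u := by
        intro u hu
        have hZu : Z u = T u := (Finset.mem_filter.1 hu).2
        rw [hT1def, comp_eq_left (by rw [hZu]; exact hTf u), hZu]
      have hT1Sm : ∀ u ∈ sep T T' \ Sp, T1 u = T' u := by
        intro u hu
        obtain ⟨huS, huSp⟩ := Finset.mem_sdiff.1 hu
        have hZne : Z u ≠ T u := by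
          intro h
          exact huSp (Finset.mem_filter.2 ⟨huS, h⟩)
        by_cases h0 : Z u = 0
        · rw [hT1def, comp_eq_right h0]
        · rcases eq_or_eq_neg_of_ne_zero (Z u) (T u) h0 (hTf u) with h | h
          · exact absurd h hZne
          · rw [hT1def, comp_eq_left h0, h, ← hT'neg u huS]
      have hsepA : sep T T1 = sep T T' \ Sp := by
        ext u
        rw [mem_sep, Finset.mem_sdiff]
        constructor
        · intro h
          by_cases huS : u ∈ sep T T'
          · refine ⟨huS, fun huSp => ?_⟩
            rw [hT1Sp u huSp] at h
            exact sq_ne_neg_one _ _ rfl h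
          · rw [hT1out u huS] at h
            exact absurd h (sq_ne_neg_one _ _ rfl)
        · rintro ⟨huS, huSp⟩
          rw [hT1Sm u (Finset.mem_sdiff.2 ⟨huS, huSp⟩)]
          exact mem_sep.1 huS
      have hsepB : sep T1 T' = Sp := by
        ext u
        rw [mem_sep]
        constructor
        · intro h
          by_cases huS : u ∈ sep T T'
          · by_cases huSp : u ∈ Sp
            · exact huSp
            · rw [hT1Sm u (Finset.mem_sdiff.2 ⟨huS, huSp⟩)] at h
              exact absurd h (sq_ne_neg_one _ _ rfl)
          · rw [hT1out u huS, hoffeq u huS] at h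
            exact absurd h (sq_ne_neg_one _ _ rfl)
        · intro huSp
          have huS : u ∈ sep T T' := Finset.mem_filter.1 huSp |>.1
          rw [hT1Sp u huSp]
          exact mem_sep.1 huS
      have hf0Sp : f0 ∉ Sp := by
        intro h
        have := (Finset.mem_filter.1 h).2
        rw [hZf0] at this
        exact hTf f0 this.symm
      have hcardA : (sep T T1).card + Sp.card = (sep T T').card := by
        rw [hsepA]
        exact Finset.card_sdiff_add_card_eq_card (Finset.filter_subset _ _)
      have hSpcard : 1 ≤ Sp.card := Finset.card_pos.2 hSpne
      have hApos : 1 ≤ (sep T T1).card := by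
        rw [hsepA]
        exact Finset.card_pos.2 ⟨f0, Finset.mem_sdiff.2 ⟨hf0, hf0Sp⟩⟩
      have hT1e : T1 e = bs b := by rw [hT1out e heS, hTe]
      have hx1 : tb T1 ∈ TopeSet L ∩ {f | f e = b} := tope_mem hT1L hT1f hT1e
      obtain ⟨p, hp⟩ := IH (sep T T1).card (by omega) T T1 hT hT1L hTf hT1f hTe hT1e
        hx hx1 le_rfl
      obtain ⟨q, hq⟩ := IH (sep T1 T').card (by rw [hsepB]; omega) T1 T' hT1L hT' hT1f hT'f
        hT1e hT'e hx1 hy le_rfl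
      refine ⟨p.append q, ?_⟩
      rw [SimpleGraph.Walk.length_append, hp, hq, hsepB]
      omega
    · by_cases hSmne : ((sep T T').filter (fun u => Z u ≠ 0)).Nonempty
      · -- T2 := comp Z T
        set Sm := (sep T T').filter (fun u => Z u ≠ 0) with hSmdef
        have hZneg : ∀ u ∈ Sm, Z u = -T u := by
          intro u hu
          obtain ⟨huS, hZu⟩ := Finset.mem_filter.1 hu
          rcases eq_or_eq_neg_of_ne_zero (Z u) (T u) hZu (hTf u) with h | h
          · exact absurd (Finset.mem_filter.2 ⟨huS, h⟩) (by
              intro hmem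
              exact hSpne ⟨u, hmem⟩)
          · exact h
        set T2 := comp Z T with hT2def
        have hT2L : T2 ∈ L := hom.c Z hZL T hT
        have hT2f : ∀ u, T2 u ≠ 0 := by
          intro u
          by_cases h : Z u = 0
          · rw [hT2def, comp_eq_right h]; exact hTf u
          · rw [hT2def, comp_eq_left h]; exact h
        have hT2out : ∀ u, u ∉ sep T T' → T2 u = T u := by
          intro u hu
          have hZu : Z u = T u := hoff u hu
          rw [hT2def, comp_eq_left (by rw [hZu]; exact hTf u), hZu]
        have hT2Sm : ∀ u ∈ Sm, T2 u = T' u := by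
          intro u hu
          have huS := (Finset.mem_filter.1 hu).1
          rw [hT2def, comp_eq_left (Finset.mem_filter.1 hu).2, hZneg u hu, ← hT'neg u huS]
        have hT2S0 : ∀ u, u ∈ sep T T' → u ∉ Sm → T2 u = T u := by
          intro u huS huSm
          have hZu : Z u = 0 := by
            by_contra h
            exact huSm (Finset.mem_filter.2 ⟨huS, h⟩)
          rw [hT2def, comp_eq_right hZu]
        have hsepA : sep T T2 = Sm := by
          ext u
          rw [mem_sep]
          constructor
          · intro h
            by_cases huS : u ∈ sep T T'
            · by_cases huSm : u ∈ Sm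
              · exact huSm
              · rw [hT2S0 u huS huSm] at h
                exact absurd h (sq_ne_neg_one _ _ rfl)
            · rw [hT2out u huS] at h
              exact absurd h (sq_ne_neg_one _ _ rfl)
          · intro huSm
            rw [hT2Sm u huSm]
            exact mem_sep.1 (Finset.mem_filter.1 huSm).1
        have hsepB : sep T2 T' = sep T T' \ Sm := by
          ext u
          rw [mem_sep, Finset.mem_sdiff]
          constructor
          · intro h
            by_cases huS : u ∈ sep T T'
            · refine ⟨huS, fun huSm => ?_⟩
              rw [hT2Sm u huSm] at h
              exact sq_ne_neg_one _ _ rfl h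
            · rw [hT2out u huS, ← hoffeq u huS] at h
              exact absurd h (sq_ne_neg_one _ _ rfl)
          · rintro ⟨huS, huSm⟩
            rw [hT2S0 u huS huSm]
            exact mem_sep.1 huS
        have hf0Sm : f0 ∉ Sm := by
          intro h
          exact (Finset.mem_filter.1 h).2 hZf0
        have hcardA : (sep T2 T').card + Sm.card = (sep T T').card := by
          rw [hsepB]
          exact Finset.card_sdiff_add_card_eq_card (Finset.filter_subset _ _)
        have hSmcard : 1 ≤ Sm.card := Finset.card_pos.2 hSmne
        have hBpos : 1 ≤ (sep T2 T').card := by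
          rw [hsepB]
          exact Finset.card_pos.2 ⟨f0, Finset.mem_sdiff.2 ⟨hf0, hf0Sm⟩⟩
        have hT2e : T2 e = bs b := by rw [hT2out e heS, hTe]
        have hx2 : tb T2 ∈ TopeSet L ∩ {f | f e = b} := tope_mem hT2L hT2f hT2e
        obtain ⟨p, hp⟩ := IH (sep T T2).card (by rw [hsepA]; omega) T T2 hT hT2L hTf hT2f
          hTe hT2e hx hx2 le_rfl
        obtain ⟨q, hq⟩ := IH (sep T2 T').card (by omega) T2 T' hT2L hT' hT2f hT'f
          hT2e hT'e hx2 hy le_rfl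
        refine ⟨p.append q, ?_⟩
        rw [SimpleGraph.Walk.length_append, hp, hq, hsepA]
        omega
      · -- Z vanishes on all of sep T T' : cube case
        have hZzero : ∀ u ∈ sep T T', Z u = 0 := by
          intro u hu
          by_contra h
          exact hSmne ⟨u, Finset.mem_filter.2 ⟨hu, h⟩⟩
        have hcT : conf Z T := by
          intro u
          by_cases huS : u ∈ sep T T'
          · exact Or.inl (hZzero u huS)
          · exact Or.inr (hoff u huS)
        have hcT' : conf Z T' := by
          intro u
          by_cases huS : u ∈ sep T T'
          · exact Or.inl (hZzero u huS)
          · exact Or.inr (by rw [hoff u huS, ← hoffeq u huS])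
        exact cube_walk hom hB hZL hZ0 (sep T T').card T T' hT hT' hTf hT'f hcT hcT'
          hx hy le_rfl

/-- A/B ⇒ halfspaces are partial cubes. -/
lemma A_to_pcube (hom : IsOM L) (hsimple : SimpleSV L)
    (hB : ∀ X ∈ L, X ≠ (0 : U → SignType) → ∀ Y : U → SignType, conf X Y → Y ∈ L)
    (e : U) (b : Bool) : IsPartialCube (TopeSet L ∩ {f | f e = b}) := by
  have hmem : ∀ v ∈ TopeSet L ∩ {f | f e = b},
      sv v ∈ L ∧ (∀ u, sv v u ≠ 0) ∧ sv v e = bs b ∧ tb (sv v) = v := by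
    intro v hv
    refine ⟨mem_TopeSet.1 hv.1, fun u => sv_ne_zero v u, ?_, tb_sv v⟩
    have hve : v e = b := hv.2
    rw [show sv v e = bs (v e) from rfl, hve]
  have hreach : ∀ x y : ↥(TopeSet L ∩ {f | f e = b}),
      ∃ p : ((cubeGraph U).induce (TopeSet L ∩ {f | f e = b})).Walk x y,
        p.length = hDist x.val y.val := by
    intro x y
    obtain ⟨hxL, hxf, hxe, hxtb⟩ := hmem x.val x.2
    obtain ⟨hyL, hyf, hye, hytb⟩ := hmem y.val y.2
    obtain ⟨p, hp⟩ := tope_walk hom hB e b (sep (sv x.val) (sv y.val)).card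
      (sv x.val) (sv y.val) hxL hyL hxf hyf hxe hye
      (tope_mem hxL hxf hxe) (tope_mem hyL hyf hye) le_rfl
    have hex : (⟨tb (sv x.val), tope_mem hxL hxf hxe⟩ :
        ↥(TopeSet L ∩ {f | f e = b})) = x := Subtype.ext hxtb
    have hey : (⟨tb (sv y.val), tope_mem hyL hyf hye⟩ :
        ↥(TopeSet L ∩ {f | f e = b})) = y := Subtype.ext hytb
    have hdx : hDist x.val y.val = (sep (sv x.val) (sv y.val)).card := by
      rw [← hDist_sep hxf hyf, hxtb, hytb]
    refine ⟨p.copy hex hey, ?_⟩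
    rw [SimpleGraph.Walk.length_copy, hp, hdx]
  constructor
  · rw [SimpleGraph.connected_iff]
    refine ⟨fun x y => ?_, ?_⟩
    · obtain ⟨p, _⟩ := hreach x y
      exact ⟨p⟩
    · obtain ⟨W, hW, hWe⟩ := hsimple.1 e (bs b)
      obtain ⟨T0, hT0L, hT0conf, hT0full⟩ := exists_tope_above hom.c hsimple.1 W hW
      have hT0e : T0 e = bs b := by
        rw [← conf_eq_of_ne_zero hT0conf (by rw [hWe]; exact bs_ne_zero b), hWe]
      exact ⟨⟨tb T0, tope_mem hT0L hT0full hT0e⟩⟩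
  · intro x hx y hy
    rw [dIn, dif_pos ⟨hx, hy⟩]
    apply le_antisymm
    · obtain ⟨p, hp⟩ := hreach ⟨x, hx⟩ ⟨y, hy⟩
      calc ((cubeGraph U).induce (TopeSet L ∩ {f | f e = b})).dist ⟨x, hx⟩ ⟨y, hy⟩
          ≤ p.length := SimpleGraph.dist_le p
        _ = hDist x y := hp
    · obtain ⟨p, _⟩ := hreach ⟨x, hx⟩ ⟨y, hy⟩
      obtain ⟨q, hq⟩ := SimpleGraph.Reachable.exists_walk_length_eq_dist ⟨p⟩
      calc hDist x y ≤ q.length := walk_ge q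
        _ = _ := hq

lemma bs_tb_eq {Y : U → SignType} {u : U} (h : Y u ≠ 0) : bs (tb Y u) = Y u := sv_tb h

lemma eq_bs_tb {Y : U → SignType} {u : U} (h : Y u ≠ 0) : Y u = bs (tb Y u) :=
  (sv_tb h).symm

/-- C ⇒ B: if all halfspaces of the tope graph are ample, every face is a cube. -/
lemma C_to_B (hom : IsOM L) (hsimple : SimpleSV L)
    (hC : ∀ (e : U) (b : Bool), IsAmple (TopeSet L ∩ {f | f e = b})) :
    ∀ X ∈ L, X ≠ (0 : U → SignType) → ∀ Y : U → SignType, conf X Y → Y ∈ L := by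
  have main : ∀ n : ℕ, ∀ X ∈ L, X ≠ (0 : U → SignType) → (zerosF X).card ≤ n →
      ∀ Y : U → SignType, conf X Y → Y ∈ L := by
    intro n
    induction n using Nat.strong_induction_on with
    | _ n IH =>
    intro X hXL hX0 hXcard Y hconf
    by_cases hn0 : (zerosF X).card = 0
    · have hXY : X = Y := by
        funext u
        rcases hconf u with h | h
        · rw [Finset.card_eq_zero] at hn0
          exact absurd (mem_zerosF.2 h) (by rw [hn0]; simp)
        · exact h
      exact hXY ▸ hXL
    set Z := zerosF X with hZdef
    have hZn : 1 ≤ Z.card := by omega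
    have hZle : Z.card ≤ n := hXcard
    have hn1 : 1 ≤ n := le_trans hZn hZle
    have hXZ : ∀ u, u ∈ Z ↔ X u = 0 := fun u => mem_zerosF
    -- B for covectors with strictly fewer zeros (from the induction hypothesis)
    have hBsmall : ∀ W ∈ L, (∀ u, X u ≠ 0 → W u = X u) →
        (Z.filter (fun u => W u ≠ 0)).Nonempty → ∀ W', conf W W' → W' ∈ L := by
      intro W hWL hWX hne W' hconf'
      obtain ⟨z, hz⟩ := hne
      have hWz : W z ≠ 0 := (Finset.mem_filter.1 hz).2
      have hW0 : W ≠ 0 := ne_zero_iff.2 ⟨z, hWz⟩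
      have hzsub : zerosF W ⊆ Z.erase z := by
        intro u hu
        have hWu : W u = 0 := mem_zerosF.1 hu
        rw [Finset.mem_erase]
        constructor
        · rintro rfl; exact hWz hWu
        · rw [hXZ]
          by_contra h
          exact (by rw [hWX u h]; exact h : W u ≠ 0) hWu
      have hcard : (zerosF W).card < n := by
        have h1 := Finset.card_le_card hzsub
        rw [Finset.card_erase_of_mem (Finset.mem_filter.1 hz).1] at h1
        omega
      exact IH (zerosF W).card hcard W hWL hW0 le_rfl W' hconf'
    -- Lifted face elements, relative supports
    -- minimal relative support size
    classical
    obtain ⟨T00, hT00L, hT00conf, hT00full⟩ := exists_tope_above hom.c hsimple.1 X hXL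
    have hT00X : ∀ u, X u ≠ 0 → T00 u = X u := by
      intro u hu
      exact (conf_eq_of_ne_zero hT00conf hu).symm
    set F' : Finset (U → SignType) := univ.filter
      (fun W => W ∈ L ∧ (∀ u, X u ≠ 0 → W u = X u) ∧ (Z.filter (fun u => W u ≠ 0)).Nonempty)
      with hF'def
    have hT00F : T00 ∈ F' := by
      simp only [hF'def, Finset.mem_filter, Finset.mem_univ, true_and]
      obtain ⟨z, hz⟩ := Finset.card_pos.1 hZn
      exact ⟨hT00L, hT00X, ⟨z, Finset.mem_filter.2 ⟨hz, hT00full z⟩⟩⟩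
    obtain ⟨W1, hW1F, hW1min⟩ := F'.exists_min_image
      (fun W => (Z.filter (fun u => W u ≠ 0)).card) ⟨T00, hT00F⟩
    simp only [hF'def, Finset.mem_filter, Finset.mem_univ, true_and] at hW1F
    set k' := (Z.filter (fun u => W1 u ≠ 0)).card with hk'def
    have hmin' : ∀ W, W ∈ L → (∀ u, X u ≠ 0 → W u = X u) →
        (Z.filter (fun u => W u ≠ 0)).Nonempty →
        k' ≤ (Z.filter (fun u => W u ≠ 0)).card := by
      intro W h1 h2 h3
      apply hW1min
      simp only [hF'def, Finset.mem_filter, Finset.mem_univ, true_and]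
      exact ⟨h1, h2, h3⟩
    have hk'1 : 1 ≤ k' := Finset.card_pos.2 hW1F.2.2
    have hk'n : k' ≤ Z.card := by
      rw [hk'def]
      exact Finset.card_le_card (Finset.filter_subset _ _)
    -- relative negation
    have hneg : ∀ W, W ∈ L → (∀ u, X u ≠ 0 → W u = X u) →
        (comp X (-W) ∈ L ∧ (∀ u, X u ≠ 0 → comp X (-W) u = X u) ∧
          ∀ u, u ∈ Z → comp X (-W) u = -W u) := by
      intro W hWL hWX
      refine ⟨hom.c X hXL (-W) (hom.sym W hWL), ?_, ?_⟩
      · intro u hu; exact comp_eq_left hu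
      · intro u hu; exact comp_eq_right ((hXZ u).1 hu)
    -- relative exchange
    have hexch : ∀ W, W ∈ L → (∀ u, X u ≠ 0 → W u = X u) →
        (Z.filter (fun u => W u ≠ 0)).card = k' →
        ∀ e ∈ Z.filter (fun u => W u ≠ 0), ∀ f ∈ Z, f ∉ Z.filter (fun u => W u ≠ 0) →
        ∃ V, V ∈ L ∧ (∀ u, X u ≠ 0 → V u = X u) ∧
          Z.filter (fun u => V u ≠ 0) = insert f ((Z.filter (fun u => W u ≠ 0)).erase e) := by
      intro W hWL hWX hWk e heS f hfZ hfS
      set S := Z.filter (fun u => W u ≠ 0) with hSdef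
      have hWf : W f = 0 := by
        by_contra h
        exact hfS (Finset.mem_filter.2 ⟨hfZ, h⟩)
      have hWe : W e ≠ 0 := (Finset.mem_filter.1 heS).2
      have heZ : e ∈ Z := (Finset.mem_filter.1 heS).1
      have hef : e ≠ f := by
        rintro rfl; exact hWe hWf
      obtain ⟨hnegL, hnegX, hnegZ⟩ := hneg W hWL hWX
      set Wp : U → SignType := fun u => if u = f then 1 else W u with hWpdef
      set Wm : U → SignType := fun u => if u = f then 1 else comp X (-W) u with hWmdef
      have hWpL : Wp ∈ L := by
        apply hBsmall W hWL hWX ⟨e, heS⟩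
        intro u
        by_cases h : u = f
        · subst h; exact Or.inl hWf
        · exact Or.inr (by simp [hWpdef, h])
      have hWmL : Wm ∈ L := by
        have hnegS : (Z.filter (fun u => comp X (-W) u ≠ 0)).Nonempty := by
          refine ⟨e, Finset.mem_filter.2 ⟨heZ, ?_⟩⟩
          rw [hnegZ e heZ]
          exact neg_ne_zero_sign _ hWe
        apply hBsmall (comp X (-W)) hnegL hnegX hnegS
        intro u
        by_cases h : u = f
        · subst h
          exact Or.inl (by rw [hnegZ u hfZ, hWf]; decide)
        · exact Or.inr (by simp [hWmdef, h])
      have hprod : Wp e * Wm e = -1 := by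
        have h1 : Wp e = W e := by simp [hWpdef, hef]
        have h2 : Wm e = -W e := by
          simp only [hWmdef, if_neg hef]
          rw [hnegZ e heZ]
        rw [h1, h2]
        exact mul_self_neg_one _ hWe
      obtain ⟨V, hVL, hVe, hVg⟩ := hom.se Wp hWpL Wm hWmL e hprod
      have hVf : V f = 1 := by
        have h1 : Wp f = Wm f := by simp [hWpdef, hWmdef]
        rw [hVg f (sq_ne_neg_one _ _ h1), comp_eq_of_eq h1]
        simp [hWpdef]
      have hVX : ∀ u, X u ≠ 0 → V u = X u := by
        intro u hu
        have huf : u ≠ f := by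
          rintro rfl
          exact hu ((hXZ u).1 hfZ)
        have h1 : Wp u = X u := by
          simp only [hWpdef, if_neg huf]
          exact hWX u hu
        have h2 : Wm u = X u := by
          simp only [hWmdef, if_neg huf]
          exact hnegX u hu
        rw [hVg u (by rw [h1, h2]; exact sq_ne_neg_one _ _ rfl), comp_eq_of_eq (h1.trans h2.symm), h1]
      have hVzero : ∀ u, u ∈ Z → u ∉ S → u ≠ f → V u = 0 := by
        intro u huZ huS huf
        have hWu : W u = 0 := by
          by_contra h
          exact huS (Finset.mem_filter.2 ⟨huZ, h⟩)
        have h1 : Wp u = 0 := by simp [hWpdef, huf, hWu]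
        have h2 : Wm u = 0 := by
          simp only [hWmdef, if_neg huf]
          rw [hnegZ u huZ, hWu]
          decide
        rw [hVg u (by rw [h1, h2]; decide), comp_eq_of_eq (h1.trans h2.symm), h1]
      refine ⟨V, hVL, hVX, ?_⟩
      have hsub : Z.filter (fun u => V u ≠ 0) ⊆ insert f (S.erase e) := by
        intro u hu
        obtain ⟨huZ, hVu⟩ := Finset.mem_filter.1 hu
        by_cases huf : u = f
        · subst huf; exact Finset.mem_insert_self _ _
        · apply Finset.mem_insert_of_mem
          rw [Finset.mem_erase]
          constructor
          · rintro rfl; exact hVu hVe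
          · by_contra h
            exact hVu (hVzero u huZ h huf)
      have hcard : (insert f (S.erase e)).card = k' := by
        rw [Finset.card_insert_of_notMem (fun h => hfS (Finset.mem_of_mem_erase h)),
          Finset.card_erase_of_mem heS, hWk]
        omega
      apply Finset.eq_of_subset_of_card_le hsub
      rw [hcard]
      apply hmin' V hVL hVX
      exact ⟨f, Finset.mem_filter.2 ⟨hfZ, by rw [hVf]; exact one_ne_zero⟩⟩
    -- all k'-subsets of Z are relative supports
    have hallk : ∀ D : Finset U, D ⊆ Z → D.card = k' →
        ∃ W, W ∈ L ∧ (∀ u, X u ≠ 0 → W u = X u) ∧ Z.filter (fun u => W u ≠ 0) = D := by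
      intro D hDZ hDcard
      have mainD : ∀ (m : ℕ) (W : U → SignType), W ∈ L → (∀ u, X u ≠ 0 → W u = X u) →
          (Z.filter (fun u => W u ≠ 0)).card = k' →
          (D \ Z.filter (fun u => W u ≠ 0)).card ≤ m →
          ∃ W', W' ∈ L ∧ (∀ u, X u ≠ 0 → W' u = X u) ∧ Z.filter (fun u => W' u ≠ 0) = D := by
        intro m
        induction m with
        | zero =>
          intro W h1 h2 h3 h4
          have hsub : D ⊆ Z.filter (fun u => W u ≠ 0) :=
            Finset.sdiff_eq_empty_iff_subset.1 (Finset.card_eq_zero.1 (Nat.le_zero.1 h4))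
          exact ⟨W, h1, h2, (Finset.eq_of_subset_of_card_le hsub (by rw [hDcard, h3])).symm⟩
        | succ m IHm =>
          intro W h1 h2 h3 h4
          rcases (D \ Z.filter (fun u => W u ≠ 0)).eq_empty_or_nonempty with hemp | ⟨f, hf⟩
          · have hsub : D ⊆ Z.filter (fun u => W u ≠ 0) :=
              Finset.sdiff_eq_empty_iff_subset.1 hemp
            exact ⟨W, h1, h2, (Finset.eq_of_subset_of_card_le hsub (by rw [hDcard, h3])).symm⟩
          · set S := Z.filter (fun u => W u ≠ 0) with hSdef
            have hfD : f ∈ D := (Finset.mem_sdiff.1 hf).1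
            have hfS : f ∉ S := (Finset.mem_sdiff.1 hf).2
            have hSD : (S \ D).Nonempty := by
              rw [← Finset.card_pos]
              have e1 := Finset.card_sdiff_add_card_inter S D
              have e2 := Finset.card_sdiff_add_card_inter D S
              rw [Finset.inter_comm] at e2
              have e3 : 0 < (D \ S).card := Finset.card_pos.2 ⟨f, hf⟩
              omega
            obtain ⟨e, he⟩ := hSD
            have heS : e ∈ S := (Finset.mem_sdiff.1 he).1
            have heD : e ∉ D := (Finset.mem_sdiff.1 he).2
            obtain ⟨V, hVL, hVX, hVsupp⟩ := hexch W h1 h2 h3 e heS f (hDZ hfD) hfS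
            have hVk : (Z.filter (fun u => V u ≠ 0)).card = k' := by
              rw [hVsupp, Finset.card_insert_of_notMem (fun h => hfS (Finset.mem_of_mem_erase h)),
                Finset.card_erase_of_mem heS, h3]
              omega
            have hdiff : D \ Z.filter (fun u => V u ≠ 0) ⊆ (D \ S).erase f := by
              intro u hu
              have huD : u ∈ D := (Finset.mem_sdiff.1 hu).1
              have huV : u ∉ Z.filter (fun u => V u ≠ 0) := (Finset.mem_sdiff.1 hu).2
              rw [hVsupp] at huV
              rw [Finset.mem_erase]
              constructor
              · rintro rfl; exact huV (Finset.mem_insert_self _ _)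
              · rw [Finset.mem_sdiff]
                refine ⟨huD, fun huS => ?_⟩
                have hue : u ≠ e := fun h => heD (h ▸ huD)
                exact huV (Finset.mem_insert_of_mem (Finset.mem_erase.2 ⟨hue, huS⟩))
            apply IHm V hVL hVX hVk
            have := Finset.card_le_card hdiff
            rw [Finset.card_erase_of_mem hf] at this
            omega
      exact mainD _ W1 hW1F.1 hW1F.2.1 rfl le_rfl
    -- signed version
    have hallks : ∀ D : Finset U, D ⊆ Z → D.card = k' → ∀ x0 ∈ D, ∀ s : SignType, s ≠ 0 →
        ∃ W, W ∈ L ∧ (∀ u, X u ≠ 0 → W u = X u) ∧ Z.filter (fun u => W u ≠ 0) = D ∧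
          W x0 = s := by
      intro D hDZ hDcard x0 hx0 s hs
      obtain ⟨W, hWL, hWX, hWsupp⟩ := hallk D hDZ hDcard
      have hx0' : x0 ∈ Z.filter (fun u => W u ≠ 0) := by rw [hWsupp]; exact hx0
      have hWx0 : W x0 ≠ 0 := (Finset.mem_filter.1 hx0').2
      rcases eq_or_eq_neg_of_ne_zero (W x0) s hWx0 hs with h | h
      · exact ⟨W, hWL, hWX, hWsupp, h⟩
      · obtain ⟨hnegL, hnegX, hnegZ⟩ := hneg W hWL hWX
        refine ⟨comp X (-W), hnegL, hnegX, ?_, ?_⟩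
        · rw [← hWsupp]
          apply Finset.filter_congr
          intro u hu
          rw [hnegZ u hu]
          exact ⟨fun hh hcon => hh (by rw [hcon]; decide), fun hh => neg_ne_zero_sign _ hh⟩
        · rw [hnegZ x0 (hDZ hx0), h, neg_neg]
    -- the key filling property
    have hFILL : ∀ g : U → Bool, ∃ T, T ∈ L ∧ (∀ u, X u ≠ 0 → T u = X u) ∧
        ∀ u ∈ Z, T u = bs (g u) := by
      by_cases hk2 : 2 ≤ k'
      · exfalso
        -- pick a coordinate of the support of X and the halfspace there
        obtain ⟨e0, he0⟩ := ne_zero_iff.1 hX0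
        set b := tb X e0 with hbdef
        have hXe0 : X e0 = bs b := eq_bs_tb he0
        obtain ⟨Z', hZ'sub, hZ'card⟩ :=
          Finset.exists_subset_card_eq (s := Z) (n := Z.card - (k' - 1)) (by omega)
        have hZ'pos : 1 ≤ Z'.card := by rw [hZ'card]; omega
        -- the halfspace shatters Z'
        have hshat : Shatters (TopeSet L ∩ {f | f e0 = b}) Z' := by
          intro g
          obtain ⟨x0, hx0⟩ := Finset.card_pos.1 hZ'pos
          set D := insert x0 (Z \ Z') with hDdef
          have hx0ZZ' : x0 ∉ Z \ Z' := fun h => (Finset.mem_sdiff.1 h).2 hx0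
          have hDZ : D ⊆ Z := by
            intro u hu
            rcases Finset.mem_insert.1 hu with rfl | h
            · exact hZ'sub hx0
            · exact (Finset.mem_sdiff.1 h).1
          have hDcard : D.card = k' := by
            rw [hDdef, Finset.card_insert_of_notMem hx0ZZ',
              Finset.card_sdiff_of_subset hZ'sub, hZ'card]
            omega
          obtain ⟨W, hWL, hWX, hWsupp, hWx0⟩ := hallks D hDZ hDcard x0
            (Finset.mem_insert_self _ _) (bs (g x0)) (bs_ne_zero _)
          -- fill the zeros of W arbitrarily with the pattern g
          set Tg : U → SignType := fun u => if W u = 0 then bs (g u) else W u with hTgdef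
          have hTgL : Tg ∈ L := by
            apply hBsmall W hWL hWX ⟨x0, by rw [hWsupp]; exact Finset.mem_insert_self _ _⟩
            intro u
            by_cases h : W u = 0
            · exact Or.inl h
            · exact Or.inr (by simp [hTgdef, h])
          have hTgfull : ∀ u, Tg u ≠ 0 := by
            intro u
            by_cases h : W u = 0
            · simp only [hTgdef, if_pos h]; exact bs_ne_zero _
            · simp only [hTgdef, if_neg h]; exact h
          have hTge0 : Tg e0 = bs b := by
            have hWe0 : W e0 = X e0 := hWX e0 he0
            have : W e0 ≠ 0 := by rw [hWe0]; exact he0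
            simp only [hTgdef, if_neg this]
            rw [hWe0, hXe0]
          refine ⟨tb Tg, tope_mem hTgL hTgfull hTge0, ?_⟩
          intro u hu
          have hTgu : Tg u = bs (g u) := by
            by_cases hux : u = x0
            · subst hux
              have : W u ≠ 0 := by rw [hWx0]; exact bs_ne_zero _
              simp only [hTgdef, if_neg this]
              exact hWx0
            · have huD : u ∉ D := by
                intro h
                rcases Finset.mem_insert.1 h with h' | h'
                · exact hux h'
                · exact (Finset.mem_sdiff.1 h').2 hu
              have hWu : W u = 0 := by
                by_contra h
                exact huD (hWsupp ▸ Finset.mem_filter.2 ⟨hZ'sub hu, h⟩)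
              simp [hTgdef, hWu]
          rw [show tb Tg u = decide (Tg u = 1) from rfl, hTgu]
          exact tb_bs _
        -- ample gives a cube, the cube gives a covector with small relative support
        obtain ⟨a, ha⟩ := hC e0 b Z' hshat
        have hfam : ∀ g : U → Bool, ∃ V ∈ L, (∀ x ∈ Z', V x = bs (g x)) ∧
            (∀ y ∈ Z'ᶜ, V y = sv a y) := by
          intro g
          have hmem := ha g
          refine ⟨sv (fun i => if i ∈ Z' then g i else a i), mem_TopeSet.1 hmem.1, ?_, ?_⟩
          · intro x hx
            simp [sv, hx]
          · intro y hy
            rw [Finset.mem_compl] at hy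
            simp [sv, hy]
        obtain ⟨V, hVL, hVZ', hVc⟩ := elim_family hom.se Z' Z'ᶜ disjoint_compl_right
          (sv a) hfam
        set W := comp X V with hWdef
        have hWL : W ∈ L := hom.c X hXL V hVL
        have hWX : ∀ u, X u ≠ 0 → W u = X u := fun u hu => comp_eq_left hu
        have hWsupp : Z.filter (fun u => W u ≠ 0) = Z \ Z' := by
          ext u
          rw [Finset.mem_filter, Finset.mem_sdiff]
          constructor
          · rintro ⟨huZ, hWu⟩
            refine ⟨huZ, fun huZ' => ?_⟩
            rw [hWdef, comp_eq_right ((hXZ u).1 huZ), hVZ' u huZ'] at hWu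
            exact hWu rfl
          · rintro ⟨huZ, huZ'⟩
            refine ⟨huZ, ?_⟩
            rw [hWdef, comp_eq_right ((hXZ u).1 huZ), hVc u (Finset.mem_compl.2 huZ')]
            exact sv_ne_zero a u
        have hne : (Z.filter (fun u => W u ≠ 0)).Nonempty := by
          rw [hWsupp, ← Finset.card_pos, Finset.card_sdiff_of_subset hZ'sub, hZ'card]
          omega
        have := hmin' W hWL hWX hne
        rw [hWsupp, Finset.card_sdiff_of_subset hZ'sub, hZ'card] at this
        omega
      · -- k' = 1 : compose the singleton generators
        have hk1 : k' = 1 := by omega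
        have hsingle : ∀ z ∈ Z, ∀ s : SignType, s ≠ 0 →
            ∃ W, W ∈ L ∧ (∀ u, X u ≠ 0 → W u = X u) ∧
              (∀ u ∈ Z, u ≠ z → W u = 0) ∧ W z = s := by
          intro z hz s hs
          obtain ⟨W, hWL, hWX, hWsupp, hWz⟩ := hallks {z}
            (by intro u hu; rw [Finset.mem_singleton] at hu; exact hu ▸ hz)
            (by rw [Finset.card_singleton, hk1]) z (Finset.mem_singleton_self z) s hs
          refine ⟨W, hWL, hWX, ?_, hWz⟩
          intro u hu huz
          by_contra h
          have : u ∈ ({z} : Finset U) := hWsupp ▸ Finset.mem_filter.2 ⟨hu, h⟩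
          exact huz (Finset.mem_singleton.1 this)
        intro g
        have chain : ∀ S : Finset U, S ⊆ Z → ∃ T, T ∈ L ∧ (∀ u, X u ≠ 0 → T u = X u) ∧
            ∀ u ∈ S, T u = bs (g u) := by
          intro S
          induction S using Finset.induction_on with
          | empty =>
            intro _
            exact ⟨T00, hT00L, hT00X, fun u hu => absurd hu (by simp)⟩
          | @insert z S hzS IHS =>
            intro hins
            have hzZ : z ∈ Z := hins (Finset.mem_insert_self _ _)
            have hSZ : S ⊆ Z := fun u hu => hins (Finset.mem_insert_of_mem hu)
            obtain ⟨T', hT'L, hT'X, hT'S⟩ := IHS hSZ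
            obtain ⟨W, hWL, hWX, hWzero, hWz⟩ := hsingle z hzZ (bs (g z)) (bs_ne_zero _)
            refine ⟨comp W T', hom.c W hWL T' hT'L, ?_, ?_⟩
            · intro u hu
              rw [comp_eq_left (by rw [hWX u hu]; exact hu), hWX u hu]
            · intro u hu
              rcases Finset.mem_insert.1 hu with rfl | huS
              · rw [comp_eq_left (by rw [hWz]; exact bs_ne_zero _), hWz]
              · have huz : u ≠ z := fun h => hzS (h ▸ huS)
                rw [comp_eq_right (hWzero u (hSZ huS) huz)]
                exact hT'S u huS
        exact chain Z (fun u hu => hu)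
    -- conclude : build Y from the filling property by elimination
    set S := Z.filter (fun u => Y u = 0) with hSdef
    have hfam : ∀ g : U → Bool, ∃ V ∈ L, (∀ x ∈ S, V x = bs (g x)) ∧
        (∀ y ∈ Sᶜ, V y = Y y) := by
      intro g
      obtain ⟨T, hTL, hTX, hTZ⟩ := hFILL (fun u => if u ∈ S then g u else tb Y u)
      refine ⟨T, hTL, ?_, ?_⟩
      · intro x hx
        rw [hTZ x (Finset.mem_filter.1 hx).1]
        simp [hx]
      · intro y hy
        rw [Finset.mem_compl] at hy
        by_cases hyZ : y ∈ Z
        · have hYy : Y y ≠ 0 := by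
            intro h
            exact hy (Finset.mem_filter.2 ⟨hyZ, h⟩)
          rw [hTZ y hyZ, if_neg hy]
          exact bs_tb_eq hYy
        · have hXy : X y ≠ 0 := fun h => hyZ ((hXZ y).2 h)
          rw [hTX y hXy, ← conf_eq_of_ne_zero hconf hXy]
    obtain ⟨V, hVL, hVS, hVc⟩ := elim_family hom.se S Sᶜ disjoint_compl_right Y hfam
    have hVY : V = Y := by
      funext u
      by_cases hu : u ∈ S
      · rw [hVS u hu, (Finset.mem_filter.1 hu).2]
      · exact hVc u (Finset.mem_compl.2 hu)
    exact hVY ▸ hVL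
  intro X hX hX0 Y hconf
  exact main (zerosF X).card X hX hX0 le_rfl Y hconf

end S15

/-- A (simple) oriented matroid is uniform if and only if every proper
face `F(X)` (with `X ≠ 0`) is a hypercube (every sign vector above `X` is a covector), and
this holds if and only if every halfspace of its tope graph is an ample partial cube. -/
theorem stmt15 [Fintype U] [DecidableEq U] (L : Set (U → SignType))
    (hom : IsOM L) (hsimple : SimpleSV L) :
    ((∃ r : ℕ, IsUOMofRank L r) ↔
      ∀ X ∈ L, X ≠ (0 : U → SignType) →
        ∀ Y : U → SignType, (∀ e, X e = 0 ∨ X e = Y e) → Y ∈ L) ∧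
    ((∃ r : ℕ, IsUOMofRank L r) ↔
      ∀ (e : U) (b : Bool), IsAmple (TopeSet L ∩ {f | f e = b})) := by
  constructor
  · constructor
    · rintro ⟨r, hU⟩ X hX hX0 Y hconf
      exact S15.A_to_B hom hU X hX hX0 Y hconf
    · intro hB
      exact S15.B_to_A hom hsimple hB
  · constructor
    · rintro ⟨r, hU⟩ e b
      exact S15.A_to_ample hom hsimple hU e b
    · intro hC
      exact S15.B_to_A hom hsimple (S15.C_to_B hom hsimple hC)
end

section
/- The class of uniform oriented matroids is closed under contraction of Θ-classes of the tope graph: if G is the tope graph of a UOM and E_i a Θ-class, then π_i(G) is the tope graph of a UOM. -/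
open Finset
open scoped Classical

variable {U : Type*}

/-- Deleting a coordinate preserves ampleness. -/
private lemma ample_proj [Fintype U] [DecidableEq U] (e : U) (A : Set (U → Bool))
    (hA : IsAmple A) :
    IsAmple ((fun (f : U → Bool) (i : {i : U // i ≠ e}) => f i.1) '' A) := by
  intro X hX
  set X' : Finset U := X.image Subtype.val with hX'def
  have hmem : ∀ j : {i : U // i ≠ e}, j.1 ∈ X' ↔ j ∈ X := by
    intro j
    constructor
    · intro h
      obtain ⟨k, hk, hkj⟩ := Finset.mem_image.1 h
      exact (Subtype.ext hkj) ▸ hk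
    · intro h
      exact Finset.mem_image_of_mem _ h
  have hshat : Shatters A X' := by
    intro G
    obtain ⟨b, hb, hbg⟩ := hX (fun j => G j.1)
    obtain ⟨a, ha, rfl⟩ := hb
    refine ⟨a, ha, fun i hi => ?_⟩
    obtain ⟨j, hj, rfl⟩ := Finset.mem_image.1 hi
    exact hbg j hj
  obtain ⟨a, ha⟩ := hA X' hshat
  refine ⟨fun j => a j.1, fun g => ?_⟩
  refine ⟨(fun i => if i ∈ X' then (if h : i ≠ e then g ⟨i, h⟩ else false) else a i),
    ha _, ?_⟩
  funext j
  by_cases hj : j ∈ X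
  · have h1 : j.1 ∈ X' := (hmem j).2 hj
    simp [h1, hj, j.2]
  · have h1 : j.1 ∉ X' := fun h => hj ((hmem j).1 h)
    simp [h1, hj]

private lemma topeset_proj [Fintype U] [DecidableEq U] (L : Set (U → SignType)) (e : U)
    (hom : IsOM L) (hsimple : SimpleSV L) :
    TopeSet ((fun (X : U → SignType) (i : {i : U // i ≠ e}) => X i.1) '' L) =
      (fun (f : U → Bool) (i : {i : U // i ≠ e}) => f i.1) '' TopeSet L := by
  ext f
  constructor
  · rintro ⟨W, ⟨hWL, hWfull⟩, rfl⟩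
    obtain ⟨X, hX, rfl⟩ := hWL
    obtain ⟨Y, hY, hYe⟩ := hsimple.1 e 1
    have hT : comp X Y ∈ L := hom.c X hX Y hY
    have hTfull : ∀ i, comp X Y i ≠ 0 := by
      intro i
      by_cases hie : i = e
      · subst hie
        by_cases h0 : X i = 0
        · simpa [comp, h0, hYe] using one_ne_zero
        · simpa [comp, h0] using h0
      · have h0 : X i ≠ 0 := hWfull ⟨i, hie⟩
        simpa [comp, h0] using h0
    refine ⟨tb (comp X Y), ⟨comp X Y, ⟨hT, hTfull⟩, rfl⟩, ?_⟩
    funext j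
    have h0 : X j.1 ≠ 0 := hWfull j
    simp [tb, comp, h0]
  · rintro ⟨g, ⟨T, ⟨hTL, hTfull⟩, rfl⟩, rfl⟩
    exact ⟨fun j => T j.1, ⟨⟨T, hTL, rfl⟩, fun j => hTfull j.1⟩, rfl⟩

/-- The class of uniform oriented matroids (per the given context: oriented
matroids in which all halfspaces of the tope graph are ample partial cubes) is closed under
contraction of Θ-classes of the tope graph: contracting the Θ-class of the coordinate `e`
(restricting all topes to the coordinates `≠ e`) yields the tope graph of a UOM. -/
theorem stmt16 [Fintype U] [DecidableEq U] (L : Set (U → SignType)) (e : U)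
    (hom : IsOM L) (hsimple : SimpleSV L)
    (huom : ∀ (i : U) (b : Bool), IsAmple (TopeSet L ∩ {f | f i = b}))
    (hclass : (∃ f ∈ TopeSet L, f e = true) ∧ (∃ f ∈ TopeSet L, f e = false)) :
    ∃ L' : Set ({i : U // i ≠ e} → SignType), IsOM L' ∧
      TopeSet L' = (fun (f : U → Bool) (i : {i : U // i ≠ e}) => f i.1) '' TopeSet L ∧
      ∀ (i : {i : U // i ≠ e}) (b : Bool), IsAmple (TopeSet L' ∩ {f | f i = b}) := by
  classical
  refine ⟨(fun (X : U → SignType) (i : {i : U // i ≠ e}) => X i.1) '' L, ?_, ?_, ?_⟩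
  · constructor
    · rintro W1 ⟨X, hX, rfl⟩ W2 ⟨Y, hY, rfl⟩
      exact ⟨comp X Y, hom.c X hX Y hY, rfl⟩
    · rintro W1 ⟨X, hX, rfl⟩ W2 ⟨Y, hY, rfl⟩ f hf
      obtain ⟨Z, hZ, hZe, hZf⟩ := hom.se X hX Y hY f.1 hf
      exact ⟨fun j => Z j.1, ⟨Z, hZ, rfl⟩, hZe, fun g hg => hZf g.1 hg⟩
    · rintro W ⟨X, hX, rfl⟩
      exact ⟨-X, hom.sym X hX, rfl⟩
  · exact topeset_proj L e hom hsimple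
  · intro i b
    rw [topeset_proj L e hom hsimple]
    have hset : ((fun (f : U → Bool) (j : {i : U // i ≠ e}) => f j.1) '' TopeSet L) ∩
        {f | f i = b} =
        (fun (f : U → Bool) (j : {i : U // i ≠ e}) => f j.1) ''
          (TopeSet L ∩ {f | f i.1 = b}) := by
      ext f
      constructor
      · rintro ⟨⟨g, hg, rfl⟩, hfb⟩
        exact ⟨g, ⟨hg, hfb⟩, rfl⟩
      · rintro ⟨g, ⟨hg, hgb⟩, rfl⟩
        exact ⟨⟨g, hg, rfl⟩, hgb⟩
    rw [hset]
    exact ample_proj e _ (huom i.1 b)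
end

section
/- Let G be a subgraph of the hypercube Q_m which is an isometric subgraph of Q_m and admits an isometric cover (G₁, G₀, G₂) where G₁, G₂, and G₀ = G₁ ∩ G₂ are ample partial cubes with G₀ ≠ G₁, G₂. Then G is ample. -/
open Finset
open scoped Classical

variable {U : Type*}

section Basic
variable [Fintype U] [DecidableEq U]

lemma hDist_comm (x y : U → Bool) : hDist x y = hDist y x := by
  unfold hDist
  congr 1
  apply Finset.filter_congr
  intro i _
  exact ne_comm

lemma hDist_self (x : U → Bool) : hDist x x = 0 := by simp [hDist]

lemma diff_subset (a b u : U → Bool) :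
    (Finset.univ.filter fun i => a i ≠ b i) ⊆
      (Finset.univ.filter fun i => a i ≠ u i) ∪ (Finset.univ.filter fun i => u i ≠ b i) := by
  intro j hj
  simp only [mem_filter, mem_univ, true_and, mem_union] at *
  by_contra h
  push_neg at h
  obtain ⟨h1, h2⟩ := h
  exact hj (h1.trans h2)

lemma hDist_triangle (a u b : U → Bool) : hDist a b ≤ hDist a u + hDist u b := by
  calc hDist a b ≤ ((Finset.univ.filter fun i => a i ≠ u i)
      ∪ (Finset.univ.filter fun i => u i ≠ b i)).card := Finset.card_le_card (diff_subset a b u)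
    _ ≤ hDist a u + hDist u b := Finset.card_union_le _ _

lemma hDist_eq_agree {a u b : U → Bool} (h : hDist a u + hDist u b = hDist a b) :
    ∀ j, a j = b j → u j = a j := by
  intro j hab
  by_contra hne
  have hj : j ∈ (Finset.univ.filter fun i => a i ≠ u i)
      ∩ (Finset.univ.filter fun i => u i ≠ b i) := by
    simp only [mem_inter, mem_filter, mem_univ, true_and]
    exact ⟨fun hh => hne hh.symm, fun hh => hne (hab ▸ hh)⟩
  have hpos : 0 < ((Finset.univ.filter fun i => a i ≠ u i)
      ∩ (Finset.univ.filter fun i => u i ≠ b i)).card := Finset.card_pos.2 ⟨j, hj⟩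
  have hcui := Finset.card_union_add_card_inter
    (Finset.univ.filter fun i => a i ≠ u i) (Finset.univ.filter fun i => u i ≠ b i)
  have hun : hDist a b ≤ ((Finset.univ.filter fun i => a i ≠ u i)
      ∪ (Finset.univ.filter fun i => u i ≠ b i)).card := Finset.card_le_card (diff_subset a b u)
  have : hDist a b + 1 ≤ hDist a u + hDist u b := by
    unfold hDist at *
    omega
  omega

end Basic

section Geo
variable [Fintype U] [DecidableEq U]

lemma induce_adj {G : Set (U → Bool)} {x y : ↥G}
    (h : ((cubeGraph U).induce G).Adj x y) : hDist x.val y.val = 1 := h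

lemma hDist_le_walk_length {G : Set (U → Bool)} :
    ∀ {a b : ↥G} (p : ((cubeGraph U).induce G).Walk a b), hDist a.val b.val ≤ p.length := by
  intro a b p
  induction p with
  | nil => simp [hDist_self]
  | cons h q ih =>
    rename_i u v w
    calc hDist u.val w.val ≤ hDist u.val v.val + hDist v.val w.val := hDist_triangle _ _ _
      _ ≤ 1 + q.length := by
          have := induce_adj h
          omega
      _ = (SimpleGraph.Walk.cons h q).length := by
          rw [SimpleGraph.Walk.length_cons]; omega

lemma cross_walk {G G1 G2 : Set (U → Bool)}
    (hedge : ∀ x ∈ G, ∀ y ∈ G, hDist x y = 1 → (x ∈ G1 ∧ y ∈ G1) ∨ (x ∈ G2 ∧ y ∈ G2)) :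
    ∀ {a b : ↥G} (p : ((cubeGraph U).induce G).Walk a b), p.length = hDist a.val b.val →
      a.val ∈ G1 → b.val ∉ G1 →
      ∃ w, w ∈ G1 ∧ w ∈ G2 ∧ ∀ j, a.val j = b.val j → w j = a.val j := by
  intro a b p
  induction p with
  | nil => intro _ h1 h2; exact absurd h1 h2
  | cons h q ih =>
    rename_i u v w
    intro hlen hu1 hw1
    have hd1 : hDist u.val v.val = 1 := induce_adj h
    have hq : hDist v.val w.val ≤ q.length := hDist_le_walk_length q
    have htri : hDist u.val w.val ≤ hDist u.val v.val + hDist v.val w.val :=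
      hDist_triangle _ _ _
    have hlen' : q.length + 1 = hDist u.val w.val := by
      rw [SimpleGraph.Walk.length_cons] at hlen; omega
    have heq : hDist u.val v.val + hDist v.val w.val = hDist u.val w.val := by omega
    have hagree : ∀ j, u.val j = w.val j → v.val j = u.val j := hDist_eq_agree heq
    by_cases hv1 : v.val ∈ G1
    · obtain ⟨x, hx1, hx2, hx3⟩ := ih (by omega) hv1 hw1
      refine ⟨x, hx1, hx2, fun j hj => ?_⟩
      have h1 := hagree j hj
      have := hx3 j (h1.trans hj)
      rw [this, h1]
    · rcases hedge u.val u.2 v.val v.2 hd1 with ⟨_, hc⟩ | ⟨hu2, _⟩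
      · exact absurd hc hv1
      · exact ⟨u.val, hu1, hu2, fun j _ => rfl⟩

lemma cross {G G1 G2 : Set (U → Bool)} (hG : IsPartialCube G)
    (hedge : ∀ x ∈ G, ∀ y ∈ G, hDist x y = 1 → (x ∈ G1 ∧ y ∈ G1) ∨ (x ∈ G2 ∧ y ∈ G2))
    {a b : U → Bool} (haG : a ∈ G) (hbG : b ∈ G) (ha1 : a ∈ G1) (hb1 : b ∉ G1) :
    ∃ w, w ∈ G1 ∧ w ∈ G2 ∧ ∀ j, a j = b j → w j = a j := by
  obtain ⟨p, hp⟩ := hG.1.exists_walk_length_eq_dist ⟨a, haG⟩ ⟨b, hbG⟩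
  have hd : ((cubeGraph U).induce G).dist ⟨a, haG⟩ ⟨b, hbG⟩ = hDist a b := by
    have := hG.2 a haG b hbG
    rw [dIn, dif_pos ⟨haG, hbG⟩] at this
    exact this
  exact cross_walk hedge p (by rw [hp, hd]) ha1 hb1

end Geo

section Comb
set_option linter.unusedSectionVars false
variable [Fintype U] [DecidableEq U]

def shatF (A : Finset (U → Bool)) (X : Finset U) : Prop :=
  ∀ g : U → Bool, ∃ a ∈ A, ∀ i ∈ X, a i = g i

def sshatF (A : Finset (U → Bool)) (X : Finset U) : Prop :=
  ∃ a : U → Bool, ∀ g : U → Bool, (fun i => if i ∈ X then g i else a i) ∈ A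

noncomputable def shS (A : Finset (U → Bool)) : Finset (Finset U) :=
  univ.filter (shatF A)

noncomputable def sshS (A : Finset (U → Bool)) : Finset (Finset U) :=
  univ.filter (sshatF A)

lemma mem_shS {A : Finset (U → Bool)} {X : Finset U} : X ∈ shS A ↔ shatF A X := by
  simp [shS]

lemma mem_sshS {A : Finset (U → Bool)} {X : Finset U} : X ∈ sshS A ↔ sshatF A X := by
  simp [sshS]

lemma shatF_mono {A B : Finset (U → Bool)} (h : A ⊆ B) {X : Finset U}
    (hs : shatF A X) : shatF B X := by
  intro g
  obtain ⟨a, ha, hag⟩ := hs g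
  exact ⟨a, h ha, hag⟩

lemma sshatF_mono {A B : Finset (U → Bool)} (h : A ⊆ B) {X : Finset U}
    (hs : sshatF A X) : sshatF B X := by
  obtain ⟨a, ha⟩ := hs
  exact ⟨a, fun g => h (ha g)⟩

lemma shS_mono {A B : Finset (U → Bool)} (h : A ⊆ B) : shS A ⊆ shS B := by
  intro X hX
  rw [mem_shS] at *
  exact shatF_mono h hX

lemma sshS_mono {A B : Finset (U → Bool)} (h : A ⊆ B) : sshS A ⊆ sshS B := by
  intro X hX
  rw [mem_sshS] at *
  exact sshatF_mono h hX

lemma shatF_nonempty {A : Finset (U → Bool)} {X : Finset U} (h : shatF A X) : A.Nonempty := by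
  obtain ⟨a, ha, _⟩ := h (fun _ => false)
  exact ⟨a, ha⟩

lemma shatF_empty {A : Finset (U → Bool)} (h : A.Nonempty) : shatF A (∅ : Finset U) := by
  intro g
  exact ⟨h.choose, h.choose_spec, by simp⟩

lemma sshatF_empty_iff {A : Finset (U → Bool)} : sshatF A (∅ : Finset U) ↔ A.Nonempty := by
  constructor
  · rintro ⟨a, ha⟩
    have := ha (fun _ => false)
    simp only [notMem_empty, if_false] at this
    exact ⟨_, this⟩
  · rintro ⟨a, ha⟩
    refine ⟨a, fun g => ?_⟩
    simpa using ha

/-! ### Fibers along a coordinate -/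

noncomputable def fib0 (A : Finset (U → Bool)) (i : U) : Finset (U → Bool) :=
  A.filter (fun a => a i = false)

noncomputable def fib1 (A : Finset (U → Bool)) (i : U) : Finset (U → Bool) :=
  (A.filter (fun a => a i = true)).image (fun a => Function.update a i false)

lemma mem_fib0 {A : Finset (U → Bool)} {i : U} {x : U → Bool} :
    x ∈ fib0 A i ↔ x ∈ A ∧ x i = false := by simp [fib0]

lemma mem_fib1 {A : Finset (U → Bool)} {i : U} {x : U → Bool} :
    x ∈ fib1 A i ↔ x i = false ∧ Function.update x i true ∈ A := by
  simp only [fib1, mem_image, mem_filter]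
  constructor
  · rintro ⟨a, ⟨haA, hai⟩, rfl⟩
    refine ⟨Function.update_self i false a, ?_⟩
    have : Function.update (Function.update a i false) i true = a := by
      funext j
      by_cases hj : j = i
      · subst hj; simp [hai]
      · simp [Function.update_of_ne hj]
    rw [this]; exact haA
  · rintro ⟨hx, hA⟩
    refine ⟨Function.update x i true, ⟨hA, Function.update_self i true x⟩, ?_⟩
    funext j
    by_cases hj : j = i
    · subst hj; simp [hx]
    · simp [Function.update_of_ne hj]

lemma fib0_subset {A : Finset (U → Bool)} {i : U} : fib0 A i ⊆ A := filter_subset _ _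

lemma fib0_flat {A : Finset (U → Bool)} {i : U} : ∀ a ∈ fib0 A i, a i = false := by
  intro a ha; exact (mem_fib0.1 ha).2

lemma fib1_flat {A : Finset (U → Bool)} {i : U} : ∀ a ∈ fib1 A i, a i = false := by
  intro a ha; exact (mem_fib1.1 ha).1

lemma card_fib (A : Finset (U → Bool)) (i : U) :
    A.card = (fib0 A i).card + (fib1 A i).card := by
  have h1 : (fib1 A i).card = (A.filter (fun a => a i = true)).card := by
    apply card_image_of_injOn
    intro a ha b hb hab
    simp only [coe_filter, Set.mem_setOf_eq] at ha hb
    funext j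
    by_cases hj : j = i
    · subst hj; rw [ha.2, hb.2]
    · have h := congrFun hab j
      dsimp only at h
      rwa [Function.update_of_ne hj, Function.update_of_ne hj] at h
  have h2 : (A.filter (fun a => a i = false)).card
      + (A.filter (fun a => ¬ a i = false)).card = A.card :=
    card_filter_add_card_filter_not (fun a : U → Bool => a i = false)
  have h3 : A.filter (fun a => ¬ a i = false) = A.filter (fun a => a i = true) := by
    apply filter_congr
    intro a _
    simp
  rw [h3] at h2
  have h4 : (fib0 A i).card = (A.filter (fun a => a i = false)).card := rfl
  linarith

lemma shat_flat {B : Finset (U → Bool)} {i : U} (hB : ∀ a ∈ B, a i = false)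
    {X : Finset U} (h : shatF B X) : i ∉ X := by
  intro hiX
  obtain ⟨a, haB, hag⟩ := h (fun _ => true)
  have := hag i hiX
  rw [hB a haB] at this
  simp at this

lemma sshat_flat {B : Finset (U → Bool)} {i : U} (hB : ∀ a ∈ B, a i = false)
    {X : Finset U} (h : sshatF B X) : i ∉ X := by
  intro hiX
  obtain ⟨a, ha⟩ := h
  have hmem := ha (fun _ => true)
  have h2 : (if i ∈ X then true else a i) = false := hB _ hmem
  rw [if_pos hiX] at h2
  simp at h2
/-! ### Decomposition of (strong) shattering along a coordinate -/

lemma update_update_self {a : U → Bool} {i : U} (h : a i = true) :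
    Function.update (Function.update a i false) i true = a := by
  funext j
  by_cases hj : j = i
  · subst hj; simp [h]
  · simp [Function.update_of_ne hj]

lemma shat_split {A : Finset (U → Bool)} {i : U} {X : Finset U} (hiX : i ∉ X) :
    shatF A X ↔ shatF (fib0 A i ∪ fib1 A i) X := by
  constructor
  · intro h g
    obtain ⟨a, ha, hag⟩ := h g
    cases hb : a i with
    | false => exact ⟨a, mem_union_left _ (mem_fib0.2 ⟨ha, hb⟩), hag⟩
    | true =>
      refine ⟨Function.update a i false, mem_union_right _ (mem_fib1.2 ⟨by simp, ?_⟩), ?_⟩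
      · rw [update_update_self hb]; exact ha
      · intro j hj
        have hji : j ≠ i := fun hh => hiX (hh ▸ hj)
        rw [Function.update_of_ne hji]
        exact hag j hj
  · intro h g
    obtain ⟨a, ha, hag⟩ := h g
    rcases mem_union.1 ha with h0 | h1
    · exact ⟨a, (mem_fib0.1 h0).1, hag⟩
    · refine ⟨Function.update a i true, (mem_fib1.1 h1).2, ?_⟩
      intro j hj
      have hji : j ≠ i := fun hh => hiX (hh ▸ hj)
      rw [Function.update_of_ne hji]
      exact hag j hj

lemma shat_insert {A : Finset (U → Bool)} {i : U} {X : Finset U} (hiX : i ∉ X) :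
    shatF A (insert i X) ↔ shatF (fib0 A i) X ∧ shatF (fib1 A i) X := by
  constructor
  · intro h
    constructor
    · intro g
      obtain ⟨a, ha, hag⟩ := h (Function.update g i false)
      have hai : a i = false := by
        have := hag i (mem_insert_self i X)
        rwa [Function.update_self] at this
      refine ⟨a, mem_fib0.2 ⟨ha, hai⟩, fun j hj => ?_⟩
      have hji : j ≠ i := fun hh => hiX (hh ▸ hj)
      have := hag j (mem_insert_of_mem hj)
      rwa [Function.update_of_ne hji] at this
    · intro g
      obtain ⟨a, ha, hag⟩ := h (Function.update g i true)
      have hai : a i = true := by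
        have := hag i (mem_insert_self i X)
        rwa [Function.update_self] at this
      refine ⟨Function.update a i false, mem_fib1.2 ⟨by simp, ?_⟩, fun j hj => ?_⟩
      · rw [update_update_self hai]; exact ha
      · have hji : j ≠ i := fun hh => hiX (hh ▸ hj)
        rw [Function.update_of_ne hji]
        have := hag j (mem_insert_of_mem hj)
        rwa [Function.update_of_ne hji] at this
  · rintro ⟨h0, h1⟩ g
    cases hg : g i with
    | false =>
      obtain ⟨a, ha, hag⟩ := h0 g
      refine ⟨a, (mem_fib0.1 ha).1, fun j hj => ?_⟩
      rcases mem_insert.1 hj with rfl | hj'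
      · rw [(mem_fib0.1 ha).2, hg]
      · exact hag j hj'
    | true =>
      obtain ⟨a, ha, hag⟩ := h1 g
      refine ⟨Function.update a i true, (mem_fib1.1 ha).2, fun j hj => ?_⟩
      rcases mem_insert.1 hj with rfl | hj'
      · rw [Function.update_self, hg]
      · have hji : j ≠ i := fun hh => hiX (hh ▸ hj')
        rw [Function.update_of_ne hji]
        exact hag j hj'

lemma sshat_split {A : Finset (U → Bool)} {i : U} {X : Finset U} (hiX : i ∉ X) :
    sshatF A X ↔ sshatF (fib0 A i) X ∨ sshatF (fib1 A i) X := by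
  constructor
  · rintro ⟨a, ha⟩
    cases hai : a i with
    | false =>
      left
      refine ⟨a, fun g => mem_fib0.2 ⟨ha g, ?_⟩⟩
      show (if i ∈ X then g i else a i) = false
      rw [if_neg hiX]
      exact hai
    | true =>
      right
      refine ⟨Function.update a i false, fun g => mem_fib1.2 ⟨?_, ?_⟩⟩
      · show (if i ∈ X then g i else Function.update a i false i) = false
        rw [if_neg hiX, Function.update_self]
      · have : Function.update (fun j => if j ∈ X then g j else Function.update a i false j) i true
            = (fun j => if j ∈ X then g j else a j) := by
          funext j
          by_cases hj : j = i
          · rw [hj]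
            rw [Function.update_self, if_neg hiX]
            exact hai.symm
          · rw [Function.update_of_ne hj]
            by_cases hjX : j ∈ X
            · simp [hjX]
            · simp [hjX, Function.update_of_ne hj]
        rw [this]
        exact ha g
  · rintro (⟨a, ha⟩ | ⟨a, ha⟩)
    · exact ⟨a, fun g => fib0_subset (ha g)⟩
    · refine ⟨Function.update a i true, fun g => ?_⟩
      have hmem := ha g
      have hup := (mem_fib1.1 hmem).2
      have : Function.update (fun j => if j ∈ X then g j else a j) i true
          = (fun j => if j ∈ X then g j else Function.update a i true j) := by
        funext j
        by_cases hj : j = i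
        · rw [hj]
          rw [Function.update_self, if_neg hiX, Function.update_self]
        · rw [Function.update_of_ne hj]
          by_cases hjX : j ∈ X
          · simp [hjX]
          · simp [hjX, Function.update_of_ne hj]
      rw [← this]
      exact hup

lemma sshat_insert {A : Finset (U → Bool)} {i : U} {X : Finset U} (hiX : i ∉ X) :
    sshatF A (insert i X) ↔ sshatF (fib0 A i ∩ fib1 A i) X := by
  constructor
  · rintro ⟨a, ha⟩
    refine ⟨Function.update a i false, fun g => ?_⟩
    have hc0 : (fun j => if j ∈ X then g j else Function.update a i false j)
        = (fun j => if j ∈ insert i X then Function.update g i false j else a j) := by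
      funext j
      by_cases hj : j = i
      · rw [hj]
        rw [if_neg hiX, if_pos (mem_insert_self i X), Function.update_self,
          Function.update_self]
      · rw [Function.update_of_ne hj]
        by_cases hjX : j ∈ X
        · rw [if_pos hjX, if_pos (mem_insert_of_mem hjX), Function.update_of_ne hj]
        · rw [if_neg hjX, if_neg (by simp [hj, hjX])]
    have hc1 : Function.update (fun j => if j ∈ X then g j else Function.update a i false j) i true
        = (fun j => if j ∈ insert i X then Function.update g i true j else a j) := by
      funext j
      by_cases hj : j = i
      · rw [hj]
        rw [Function.update_self, if_pos (mem_insert_self i X), Function.update_self]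
      · rw [Function.update_of_ne hj]
        by_cases hjX : j ∈ X
        · rw [if_pos hjX, if_pos (mem_insert_of_mem hjX), Function.update_of_ne hj]
        · rw [if_neg hjX, if_neg (by simp [hj, hjX]), Function.update_of_ne hj]
    refine mem_inter.2 ⟨mem_fib0.2 ⟨?_, ?_⟩, mem_fib1.2 ⟨?_, ?_⟩⟩
    · rw [hc0]; exact ha _
    · show (if i ∈ X then g i else Function.update a i false i) = false
      rw [if_neg hiX, Function.update_self]
    · show (if i ∈ X then g i else Function.update a i false i) = false
      rw [if_neg hiX, Function.update_self]
    · rw [hc1]; exact ha _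
  · rintro ⟨a, ha⟩
    refine ⟨a, fun g => ?_⟩
    have hmem := ha g
    have hc := mem_inter.1 hmem
    have hcf' := fib0_flat _ (hc.1)
    have hcfalse : (if i ∈ X then g i else a i) = false := hcf'
    rw [if_neg hiX] at hcfalse
    cases hg : g i with
    | false =>
      have : (fun j => if j ∈ insert i X then g j else a j)
          = (fun j => if j ∈ X then g j else a j) := by
        funext j
        by_cases hj : j = i
        · rw [hj]; rw [if_pos (mem_insert_self i X), if_neg hiX, hg, hcfalse]
        · by_cases hjX : j ∈ X
          · rw [if_pos (mem_insert_of_mem hjX), if_pos hjX]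
          · rw [if_neg (by simp [hj, hjX]), if_neg hjX]
      rw [this]
      exact fib0_subset (hc.1)
    | true =>
      have : (fun j => if j ∈ insert i X then g j else a j)
          = Function.update (fun j => if j ∈ X then g j else a j) i true := by
        funext j
        by_cases hj : j = i
        · rw [hj]
          rw [if_pos (mem_insert_self i X), Function.update_self, hg]
        · rw [Function.update_of_ne hj]
          by_cases hjX : j ∈ X
          · rw [if_pos (mem_insert_of_mem hjX), if_pos hjX]
          · rw [if_neg (by simp [hj, hjX]), if_neg hjX]
      rw [this]
      exact (mem_fib1.1 hc.2).2
/-! ### Cardinality decompositions -/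

lemma union_flat {A : Finset (U → Bool)} {i : U} :
    ∀ a ∈ fib0 A i ∪ fib1 A i, a i = false := by
  intro a ha
  rcases mem_union.1 ha with h | h
  · exact fib0_flat a h
  · exact fib1_flat a h

lemma inter_flat {A : Finset (U → Bool)} {i : U} :
    ∀ a ∈ fib0 A i ∩ fib1 A i, a i = false := by
  intro a ha
  exact fib0_flat a (mem_inter.1 ha).1

lemma card_shS_decomp (A : Finset (U → Bool)) (i : U) :
    (shS A).card = (shS (fib0 A i ∪ fib1 A i)).card
      + (univ.filter (fun X : Finset U =>
          i ∉ X ∧ shatF (fib0 A i) X ∧ shatF (fib1 A i) X)).card := by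
  classical
  have hsplit : ((shS A).filter (fun X => ¬ i ∈ X)).card
      + ((shS A).filter (fun X => i ∈ X)).card = (shS A).card := by
    have := card_filter_add_card_filter_not (s := shS A) (p := fun X => ¬ i ∈ X)
    have hcong : (shS A).filter (fun X => ¬ ¬ i ∈ X) = (shS A).filter (fun X => i ∈ X) := by
      apply filter_congr
      intro X _
      simp
    rw [hcong] at this
    exact this
  have hpart1 : (shS A).filter (fun X => ¬ i ∈ X) = shS (fib0 A i ∪ fib1 A i) := by
    ext X
    simp only [mem_filter, mem_shS]
    constructor
    · rintro ⟨hs, hiX⟩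
      exact (shat_split hiX).1 hs
    · intro hs
      have hiX : i ∉ X := shat_flat union_flat hs
      exact ⟨(shat_split hiX).2 hs, hiX⟩
  have hpart2 : ((shS A).filter (fun X => i ∈ X)).card
      = (univ.filter (fun X : Finset U =>
          i ∉ X ∧ shatF (fib0 A i) X ∧ shatF (fib1 A i) X)).card := by
    apply card_bij (fun X _ => X.erase i)
    · intro X hX
      simp only [mem_filter, mem_shS] at hX
      simp only [mem_filter, mem_univ, true_and]
      refine ⟨notMem_erase i X, ?_⟩
      have hins : shatF A (insert i (X.erase i)) := by
        rw [insert_erase hX.2]; exact hX.1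
      exact (shat_insert (notMem_erase i X)).1 hins
    · intro X hX Y hY hXY
      simp only [mem_filter, mem_shS] at hX hY
      rw [← insert_erase hX.2, ← insert_erase hY.2, hXY]
    · intro Y hY
      simp only [mem_filter, mem_univ, true_and] at hY
      refine ⟨insert i Y, ?_, ?_⟩
      · simp only [mem_filter, mem_shS]
        exact ⟨(shat_insert hY.1).2 ⟨hY.2.1, hY.2.2⟩, mem_insert_self i Y⟩
      · rw [erase_insert hY.1]
  rw [← hsplit, hpart1, hpart2]

lemma card_sshS_decomp (A : Finset (U → Bool)) (i : U) :
    (sshS A).card = (sshS (fib0 A i) ∪ sshS (fib1 A i)).card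
      + (sshS (fib0 A i ∩ fib1 A i)).card := by
  classical
  have hsplit : ((sshS A).filter (fun X => ¬ i ∈ X)).card
      + ((sshS A).filter (fun X => i ∈ X)).card = (sshS A).card := by
    have := card_filter_add_card_filter_not (s := sshS A) (p := fun X => ¬ i ∈ X)
    have hcong : (sshS A).filter (fun X => ¬ ¬ i ∈ X) = (sshS A).filter (fun X => i ∈ X) := by
      apply filter_congr
      intro X _
      simp
    rw [hcong] at this
    exact this
  have hpart1 : (sshS A).filter (fun X => ¬ i ∈ X) = sshS (fib0 A i) ∪ sshS (fib1 A i) := by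
    ext X
    simp only [mem_filter, mem_sshS, mem_union, mem_sshS]
    constructor
    · rintro ⟨hs, hiX⟩
      exact (sshat_split hiX).1 hs
    · intro hs
      have hiX : i ∉ X := by
        rcases hs with h | h
        · exact sshat_flat fib0_flat h
        · exact sshat_flat fib1_flat h
      exact ⟨(sshat_split hiX).2 hs, hiX⟩
  have hpart2 : ((sshS A).filter (fun X => i ∈ X)).card
      = (sshS (fib0 A i ∩ fib1 A i)).card := by
    apply card_bij (fun X _ => X.erase i)
    · intro X hX
      simp only [mem_filter, mem_sshS] at hX
      rw [mem_sshS]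
      have hins : sshatF A (insert i (X.erase i)) := by
        rw [insert_erase hX.2]; exact hX.1
      exact (sshat_insert (notMem_erase i X)).1 hins
    · intro X hX Y hY hXY
      simp only [mem_filter, mem_sshS] at hX hY
      rw [← insert_erase hX.2, ← insert_erase hY.2, hXY]
    · intro Y hY
      rw [mem_sshS] at hY
      have hiY : i ∉ Y := sshat_flat inter_flat hY
      refine ⟨insert i Y, ?_, ?_⟩
      · simp only [mem_filter, mem_sshS]
        exact ⟨(sshat_insert hiY).2 hY, mem_insert_self i Y⟩
      · rw [erase_insert hiY]
  rw [← hsplit, hpart1, hpart2]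

/-! ### Active coordinates, Pajor inequalities -/

noncomputable def activ (A : Finset (U → Bool)) : Finset U :=
  univ.filter (fun i => ∃ a ∈ A, ∃ b ∈ A, a i ≠ b i)

lemma activ_empty_subsingleton {A : Finset (U → Bool)} (h : activ A = ∅) :
    ∀ a ∈ A, ∀ b ∈ A, a = b := by
  intro a ha b hb
  funext j
  by_contra hne
  have : j ∈ activ A := by
    simp only [activ, mem_filter, mem_univ, true_and]
    exact ⟨a, ha, b, hb, hne⟩
  rw [h] at this
  exact notMem_empty _ this

lemma activ_mono {A B : Finset (U → Bool)} (h : A ⊆ B) : activ A ⊆ activ B := by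
  intro j hj
  simp only [activ, mem_filter, mem_univ, true_and] at *
  obtain ⟨a, ha, b, hb, hne⟩ := hj
  exact ⟨a, h ha, b, h hb, hne⟩

lemma activ_union_fib {A : Finset (U → Bool)} {i : U} :
    activ (fib0 A i ∪ fib1 A i) ⊆ (activ A).erase i := by
  intro j hj
  simp only [activ, mem_filter, mem_univ, true_and] at hj
  obtain ⟨a, ha, b, hb, hne⟩ := hj
  have hji : j ≠ i := by
    intro hh
    subst hh
    rw [union_flat a ha, union_flat b hb] at hne
    exact hne rfl
  rw [mem_erase]
  refine ⟨hji, ?_⟩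
  simp only [activ, mem_filter, mem_univ, true_and]
  have hlift : ∀ c ∈ fib0 A i ∪ fib1 A i, ∃ c' ∈ A, c' j = c j := by
    intro c hc
    rcases mem_union.1 hc with h0 | h1
    · exact ⟨c, (mem_fib0.1 h0).1, rfl⟩
    · refine ⟨Function.update c i true, (mem_fib1.1 h1).2, Function.update_of_ne hji _ _⟩
  obtain ⟨a', ha', haj⟩ := hlift a ha
  obtain ⟨b', hb', hbj⟩ := hlift b hb
  exact ⟨a', ha', b', hb', by rw [haj, hbj]; exact hne⟩

lemma pajor_base {A : Finset (U → Bool)} (h : activ A = ∅) : A.card ≤ (shS A).card := by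
  rcases A.eq_empty_or_nonempty with rfl | ⟨a, ha⟩
  · simp
  · have h1 : A.card ≤ 1 := card_le_one.2 (fun x hx y hy => activ_empty_subsingleton h x hx y hy)
    have h2 : 1 ≤ (shS A).card := by
      apply card_pos.2
      exact ⟨∅, mem_shS.2 (shatF_empty ⟨a, ha⟩)⟩
    omega

lemma card_fib_split (A : Finset (U → Bool)) (i : U) :
    (fib0 A i ∪ fib1 A i).card + (fib0 A i ∩ fib1 A i).card = A.card := by
  rw [card_union_add_card_inter, ← card_fib]

lemma pajor_aux : ∀ (n : ℕ) (A : Finset (U → Bool)), (activ A).card ≤ n →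
    A.card ≤ (shS A).card := by
  intro n
  induction n with
  | zero =>
    intro A hA
    exact pajor_base (card_eq_zero.1 (Nat.le_zero.1 hA))
  | succ n ih =>
    intro A hA
    rcases (activ A).eq_empty_or_nonempty with he | ⟨i, hi⟩
    · exact pajor_base he
    · have hmeas : ((activ A).erase i).card ≤ n := by
        have := card_erase_of_mem hi
        have hpos : 0 < (activ A).card := card_pos.2 ⟨i, hi⟩
        omega
      have hA' : (activ (fib0 A i ∪ fib1 A i)).card ≤ n :=
        le_trans (card_le_card activ_union_fib) hmeas
      have hA'' : (activ (fib0 A i ∩ fib1 A i)).card ≤ n := by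
        refine le_trans (card_le_card ?_) hA'
        exact activ_mono (fun x hx => by
          rcases mem_inter.1 hx with ⟨h0, _⟩
          exact mem_union_left _ h0)
      have h1 := ih _ hA'
      have h2 := ih _ hA''
      have hsub : shS (fib0 A i ∩ fib1 A i) ⊆
          univ.filter (fun X : Finset U =>
            i ∉ X ∧ shatF (fib0 A i) X ∧ shatF (fib1 A i) X) := by
        intro X hX
        rw [mem_shS] at hX
        simp only [mem_filter, mem_univ, true_and]
        refine ⟨shat_flat inter_flat hX, ?_, ?_⟩
        · exact shatF_mono inter_subset_left hX
        · exact shatF_mono inter_subset_right hX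
      have h3 := card_le_card hsub
      have h4 := card_shS_decomp A i
      have h5 := card_fib_split A i
      linarith

lemma pajor (A : Finset (U → Bool)) : A.card ≤ (shS A).card :=
  pajor_aux (activ A).card A le_rfl

lemma dual_pajor_base {A : Finset (U → Bool)} (h : activ A = ∅) :
    (sshS A).card ≤ A.card := by
  rcases A.eq_empty_or_nonempty with rfl | ⟨a, ha⟩
  · have : sshS (∅ : Finset (U → Bool)) = ∅ := by
      rw [eq_empty_iff_forall_notMem]
      intro X hX
      obtain ⟨w, hw⟩ := mem_sshS.1 hX
      exact notMem_empty _ (hw (fun _ => false))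
    simp [this]
  · have h2 : sshS A ⊆ {∅} := by
      intro X hX
      obtain ⟨w, hw⟩ := mem_sshS.1 hX
      rw [mem_singleton]
      by_contra hne
      obtain ⟨j, hj⟩ := nonempty_iff_ne_empty.2 hne
      have m1 := hw (fun _ => true)
      have m2 := hw (fun _ => false)
      have := congrFun (activ_empty_subsingleton h _ m1 _ m2) j
      simp only [if_pos hj] at this
      exact Bool.noConfusion this
    have h3 : (sshS A).card ≤ 1 := by
      calc (sshS A).card ≤ ({∅} : Finset (Finset U)).card := card_le_card h2
        _ = 1 := card_singleton _
    have h4 : 1 ≤ A.card := card_pos.2 ⟨a, ha⟩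
    omega

lemma dual_pajor_aux : ∀ (n : ℕ) (A : Finset (U → Bool)), (activ A).card ≤ n →
    (sshS A).card ≤ A.card := by
  intro n
  induction n with
  | zero =>
    intro A hA
    exact dual_pajor_base (card_eq_zero.1 (Nat.le_zero.1 hA))
  | succ n ih =>
    intro A hA
    rcases (activ A).eq_empty_or_nonempty with he | ⟨i, hi⟩
    · exact dual_pajor_base he
    · have hmeas : ((activ A).erase i).card ≤ n := by
        have := card_erase_of_mem hi
        have hpos : 0 < (activ A).card := card_pos.2 ⟨i, hi⟩
        omega
      have hA' : (activ (fib0 A i ∪ fib1 A i)).card ≤ n :=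
        le_trans (card_le_card activ_union_fib) hmeas
      have hA'' : (activ (fib0 A i ∩ fib1 A i)).card ≤ n := by
        refine le_trans (card_le_card (activ_mono (fun x hx => ?_))) hA'
        rcases mem_inter.1 hx with ⟨h0, _⟩
        exact mem_union_left _ h0
      have h1 := ih _ hA'
      have h2 := ih _ hA''
      have hsub : sshS (fib0 A i) ∪ sshS (fib1 A i) ⊆ sshS (fib0 A i ∪ fib1 A i) := by
        apply union_subset
        · exact sshS_mono subset_union_left
        · exact sshS_mono subset_union_right
      have h3 := card_le_card hsub
      have h4 := card_sshS_decomp A i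
      have h5 := card_fib_split A i
      linarith

lemma dual_pajor (A : Finset (U → Bool)) : (sshS A).card ≤ A.card :=
  dual_pajor_aux (activ A).card A le_rfl

/-! ### The extremal case: |Sh(A)| = |A| implies ample -/

lemma extremal_sshat : ∀ (k : ℕ) (X : Finset U) (A : Finset (U → Bool)), X.card ≤ k →
    (shS A).card ≤ A.card → shatF A X → sshatF A X := by
  intro k
  induction k with
  | zero =>
    intro X A hX _ hs
    have : X = ∅ := card_eq_zero.1 (Nat.le_zero.1 hX)
    subst this
    obtain ⟨a, ha⟩ := shatF_nonempty hs
    exact sshatF_empty_iff.2 ⟨a, ha⟩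
  | succ k ih =>
    intro X A hX hcard hs
    rcases X.eq_empty_or_nonempty with rfl | ⟨i, hiX⟩
    · obtain ⟨a, ha⟩ := shatF_nonempty hs
      exact sshatF_empty_iff.2 ⟨a, ha⟩
    · have hiX' : i ∉ X.erase i := notMem_erase i X
      have hdec := card_shS_decomp A i
      have hfib := card_fib_split A i
      have hp' := pajor (fib0 A i ∪ fib1 A i)
      have hp'' := pajor (fib0 A i ∩ fib1 A i)
      set T := univ.filter (fun Y : Finset U =>
        i ∉ Y ∧ shatF (fib0 A i) Y ∧ shatF (fib1 A i) Y) with hT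
      have hsub : shS (fib0 A i ∩ fib1 A i) ⊆ T := by
        intro Y hY
        rw [mem_shS] at hY
        simp only [hT, mem_filter, mem_univ, true_and]
        exact ⟨shat_flat inter_flat hY, shatF_mono inter_subset_left hY,
          shatF_mono inter_subset_right hY⟩
      have hTcard : T.card ≤ (fib0 A i ∩ fib1 A i).card := by linarith
      have heq : shS (fib0 A i ∩ fib1 A i) = T := by
        apply eq_of_subset_of_card_le hsub
        calc T.card ≤ (fib0 A i ∩ fib1 A i).card := hTcard
          _ ≤ (shS (fib0 A i ∩ fib1 A i)).card := hp''
      have hXT : X.erase i ∈ T := by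
        simp only [hT, mem_filter, mem_univ, true_and]
        have hins : shatF A (insert i (X.erase i)) := by
          rw [insert_erase hiX]; exact hs
        exact ⟨hiX', (shat_insert hiX').1 hins⟩
      have hXsh : shatF (fib0 A i ∩ fib1 A i) (X.erase i) := by
        rw [← mem_shS, heq]
        exact hXT
      have hcard'' : (shS (fib0 A i ∩ fib1 A i)).card ≤ (fib0 A i ∩ fib1 A i).card := by
        rw [heq]; exact hTcard
      have hkcard : (X.erase i).card ≤ k := by
        have := card_erase_of_mem hiX
        have hpos : 0 < X.card := card_pos.2 ⟨i, hiX⟩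
        omega
      have := ih (X.erase i) (fib0 A i ∩ fib1 A i) hkcard hcard'' hXsh
      have hres := (sshat_insert hiX').2 this
      rwa [insert_erase hiX] at hres
/-! ### Chains and connectivity of co-extremal families -/

lemma hDist_update_both {x y : U → Bool} {i : U} (h : x i = y i) (v : Bool) :
    hDist (Function.update x i v) (Function.update y i v) = hDist x y := by
  unfold hDist
  congr 1
  apply filter_congr
  intro j _
  by_cases hj : j = i
  · subst hj
    simp [h]
  · rw [Function.update_of_ne hj, Function.update_of_ne hj]

lemma hDist_update_one {x : U → Bool} {i : U} {v : Bool} (h : x i ≠ v) :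
    hDist x (Function.update x i v) = 1 := by
  unfold hDist
  rw [Finset.card_eq_one]
  refine ⟨i, ?_⟩
  ext j
  simp only [mem_filter, mem_univ, true_and, mem_singleton]
  constructor
  · intro hj
    by_contra hji
    rw [Function.update_of_ne hji] at hj
    exact hj rfl
  · rintro rfl
    rw [Function.update_self]
    exact h

inductive Chain (A : Finset (U → Bool)) : (U → Bool) → (U → Bool) → Prop
  | single {a : U → Bool} (ha : a ∈ A) : Chain A a a
  | cons {a b c : U → Bool} (ha : a ∈ A) (hab : hDist a b = 1) (h : Chain A b c) : Chain A a c

lemma Chain.mem_left {A : Finset (U → Bool)} {a b : U → Bool} (h : Chain A a b) : a ∈ A := by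
  cases h with
  | single ha => exact ha
  | cons ha _ _ => exact ha

lemma Chain.mem_right {A : Finset (U → Bool)} {a b : U → Bool} (h : Chain A a b) : b ∈ A := by
  induction h with
  | single ha => exact ha
  | cons _ _ _ ih => exact ih

lemma Chain.trans {A : Finset (U → Bool)} {a b c : U → Bool}
    (h1 : Chain A a b) (h2 : Chain A b c) : Chain A a c := by
  induction h1 with
  | single _ => exact h2
  | cons ha hab _ ih => exact Chain.cons ha hab (ih h2)

lemma Chain.concat {A : Finset (U → Bool)} {a b c : U → Bool}
    (h1 : Chain A a b) (hbc : hDist b c = 1) (hc : c ∈ A) : Chain A a c := by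
  induction h1 with
  | single ha => exact Chain.cons ha hbc (Chain.single hc)
  | cons ha hab _ ih => exact Chain.cons ha hab (ih hbc)

lemma Chain.symm {A : Finset (U → Bool)} {a b : U → Bool} (h : Chain A a b) : Chain A b a := by
  induction h with
  | single ha => exact Chain.single ha
  | cons ha hab _ ih =>
    refine ih.concat ?_ ha
    rw [hDist_comm]
    exact hab

lemma Chain.mono {A B : Finset (U → Bool)} (hAB : A ⊆ B) {a b : U → Bool}
    (h : Chain A a b) : Chain B a b := by
  induction h with
  | single ha => exact Chain.single (hAB ha)
  | cons ha hab _ ih => exact Chain.cons (hAB ha) hab ih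

lemma chain_lift_fib1 {A : Finset (U → Bool)} {i : U} {x y : U → Bool}
    (h : Chain (fib1 A i) x y) :
    Chain A (Function.update x i true) (Function.update y i true) := by
  induction h with
  | single ha => exact Chain.single (mem_fib1.1 ha).2
  | cons ha hab hch ih =>
    refine Chain.cons (mem_fib1.1 ha).2 ?_ ih
    rename_i a b c
    have hb : b ∈ fib1 A i := hch.mem_left
    have h1 : a i = b i := by
      rw [fib1_flat a ha, fib1_flat b hb]
    rw [hDist_update_both h1]
    exact hab

lemma conn_aux : ∀ (n : ℕ) (A : Finset (U → Bool)), A.card ≤ n →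
    A.card ≤ (sshS A).card → ∀ a ∈ A, ∀ b ∈ A, Chain A a b := by
  intro n
  induction n with
  | zero =>
    intro A hn _ a ha
    rw [Nat.le_zero, card_eq_zero] at hn
    subst hn
    exact absurd ha (notMem_empty a)
  | succ n ih =>
    intro A hn hco a ha b hb
    by_cases hsplit : ∃ i, (∃ x ∈ A, x i = false) ∧ (∃ y ∈ A, y i = true)
    · obtain ⟨i, ⟨x, hx, hxf⟩, ⟨y, hy, hyt⟩⟩ := hsplit
      have hf0ne : x ∈ fib0 A i := mem_fib0.2 ⟨hx, hxf⟩
      have hf1ne : Function.update y i false ∈ fib1 A i := by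
        rw [mem_fib1]
        refine ⟨Function.update_self i false y, ?_⟩
        rw [update_update_self hyt]
        exact hy
      have hcards := card_fib A i
      have hpos0 : 0 < (fib0 A i).card := card_pos.2 ⟨x, hf0ne⟩
      have hpos1 : 0 < (fib1 A i).card := card_pos.2 ⟨_, hf1ne⟩
      have hn0 : (fib0 A i).card ≤ n := by omega
      have hn1 : (fib1 A i).card ≤ n := by omega
      have hdec := card_sshS_decomp A i
      have hcui := card_union_add_card_inter (sshS (fib0 A i)) (sshS (fib1 A i))
      have hsub : sshS (fib0 A i ∩ fib1 A i) ⊆ sshS (fib0 A i) ∩ sshS (fib1 A i) := by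
        intro Y hY
        rw [mem_inter]
        exact ⟨sshS_mono inter_subset_left hY, sshS_mono inter_subset_right hY⟩
      have hsubc := card_le_card hsub
      have hdp0 := dual_pajor (fib0 A i)
      have hdp1 := dual_pajor (fib1 A i)
      have hco0 : (fib0 A i).card ≤ (sshS (fib0 A i)).card := by linarith
      have hco1 : (fib1 A i).card ≤ (sshS (fib1 A i)).card := by linarith
      have hinter_eq : sshS (fib0 A i ∩ fib1 A i) = sshS (fib0 A i) ∩ sshS (fib1 A i) := by
        apply eq_of_subset_of_card_le hsub
        linarith
      have hApp : (fib0 A i ∩ fib1 A i).Nonempty := by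
        have hmem : (∅ : Finset U) ∈ sshS (fib0 A i) ∩ sshS (fib1 A i) := by
          rw [mem_inter, mem_sshS, mem_sshS]
          exact ⟨sshatF_empty_iff.2 ⟨x, hf0ne⟩, sshatF_empty_iff.2 ⟨_, hf1ne⟩⟩
        rw [← hinter_eq, mem_sshS] at hmem
        exact sshatF_empty_iff.1 hmem
      obtain ⟨c, hc⟩ := hApp
      have hc0 : c ∈ fib0 A i := (mem_inter.1 hc).1
      have hc1 : c ∈ fib1 A i := (mem_inter.1 hc).2
      have hcA : c ∈ A := fib0_subset hc0
      have hcfalse : c i = false := fib0_flat c hc0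
      -- connect any vertex of A to c
      have hconn : ∀ z ∈ A, Chain A z c := by
        intro z hz
        cases hzb : z i with
        | false =>
          have hz0 : z ∈ fib0 A i := mem_fib0.2 ⟨hz, hzb⟩
          exact (ih (fib0 A i) hn0 hco0 z hz0 c hc0).mono fib0_subset
        | true =>
          have hz1 : Function.update z i false ∈ fib1 A i := by
            rw [mem_fib1]
            refine ⟨Function.update_self i false z, ?_⟩
            rw [update_update_self hzb]
            exact hz
          have hch := ih (fib1 A i) hn1 hco1 _ hz1 c hc1
          have hlift := chain_lift_fib1 hch
          rw [update_update_self hzb] at hlift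
          refine hlift.concat ?_ hcA
          rw [hDist_comm]
          exact hDist_update_one (by rw [hcfalse]; exact Bool.false_ne_true)
      exact (hconn a ha).trans (hconn b hb).symm
    · push_neg at hsplit
      have hab : a = b := by
        funext i
        have hi := hsplit i
        cases hbi : b i with
        | false =>
          cases hai : a i with
          | false => rfl
          | true =>
            have h1 : ∃ x ∈ A, x i = false := ⟨b, hb, hbi⟩
            exact absurd hai (hi h1 a ha)
        | true =>
          cases hai : a i with
          | true => rfl
          | false =>
            have h1 : ∃ x ∈ A, x i = false := ⟨a, ha, hai⟩
            exact absurd hbi (hi h1 b hb)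
      subst hab
      exact Chain.single ha
/-! ### Duality: complements of ample families -/

def ampF (A : Finset (U → Bool)) : Prop := ∀ X : Finset U, shatF A X → sshatF A X

lemma mem_compl_iff {A : Finset (U → Bool)} {x : U → Bool} :
    x ∈ (univ \ A) ↔ x ∉ A := by simp

lemma dual1 {A : Finset (U → Bool)} {X : Finset U} :
    shatF (univ \ A) X ↔ ¬ sshatF A (univ \ X) := by
  constructor
  · intro h
    rintro ⟨a, ha⟩
    obtain ⟨b, hb, hagree⟩ := h a
    have he : (fun i => if i ∈ univ \ X then b i else a i) = b := by
      funext i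
      by_cases hi : i ∈ X
      · rw [if_neg (by simp [hi]), hagree i hi]
      · rw [if_pos (by simp [hi])]
    have := ha b
    rw [he] at this
    exact (mem_compl_iff.1 hb) this
  · intro h g
    rw [sshatF] at h
    push_neg at h
    obtain ⟨g', hg'⟩ := h g
    refine ⟨_, mem_compl_iff.2 hg', fun i hi => ?_⟩
    rw [if_neg (by simp [hi])]
  
lemma dual2 {A : Finset (U → Bool)} {X : Finset U} :
    sshatF (univ \ A) X ↔ ¬ shatF A (univ \ X) := by
  constructor
  · rintro ⟨a, ha⟩ hsh
    obtain ⟨b, hbA, hagree⟩ := hsh a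
    have he : (fun i => if i ∈ X then b i else a i) = b := by
      funext i
      by_cases hi : i ∈ X
      · rw [if_pos hi]
      · rw [if_neg hi, hagree i (by simp [hi])]
    have := ha b
    rw [he] at this
    exact (mem_compl_iff.1 this) hbA
  · intro h
    rw [shatF] at h
    push_neg at h
    obtain ⟨g₀, hg₀⟩ := h
    refine ⟨g₀, fun g => mem_compl_iff.2 (fun hmem => ?_)⟩
    obtain ⟨i, hi, hne⟩ := hg₀ _ hmem
    simp only [mem_sdiff, mem_univ, true_and] at hi
    have : (if i ∈ X then g i else g₀ i) = g₀ i := by rw [if_neg hi]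
    exact hne this

lemma ampF_compl {A : Finset (U → Bool)} (hA : ampF A) : ampF (univ \ A) := by
  intro Y hY
  rw [dual2]
  intro hsh
  exact (dual1.1 hY) (hA _ hsh)

lemma ampF_coextremal {A : Finset (U → Bool)} (hA : ampF A) :
    A.card ≤ (sshS A).card := by
  have h1 : shS A ⊆ sshS A := by
    intro X hX
    rw [mem_shS] at hX
    rw [mem_sshS]
    exact hA X hX
  calc A.card ≤ (shS A).card := pajor A
    _ ≤ (sshS A).card := card_le_card h1

lemma ampF_compl_chain {F : Finset (U → Bool)} (hF : ampF F) {p q : U → Bool}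
    (hp : p ∉ F) (hq : q ∉ F) : Chain (univ \ F) p q := by
  have hc := ampF_compl hF
  exact conn_aux (univ \ F).card (univ \ F) le_rfl (ampF_coextremal hc)
    p (mem_compl_iff.2 hp) q (mem_compl_iff.2 hq)

lemma chain_switch {S B1 B2 : Finset (U → Bool)} (hcover : ∀ x ∈ S, x ∈ B1 ∨ x ∈ B2)
    (hdisj : ∀ x, x ∈ B1 → x ∈ B2 → False) :
    ∀ {p q : U → Bool}, Chain S p q → p ∈ B1 → q ∈ B2 →
      ∃ u v, u ∈ B1 ∧ v ∈ B2 ∧ hDist u v = 1 := by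
  intro p q h
  induction h with
  | single ha =>
    intro h1 h2
    exact absurd h2 (fun hh => hdisj _ h1 hh)
  | cons ha hab hch ih =>
    rename_i a b c
    intro h1 h2
    rcases hcover b hch.mem_left with hb1 | hb2
    · exact ih hb1 h2
    · exact ⟨a, b, h1, hb2, hab⟩
end Comb

section Main
variable [Fintype U] [DecidableEq U]

lemma claim_main {G G1 G2 : Set (U → Bool)}
    (hG : IsPartialCube G) (h1 : G1 ⊆ G) (h2 : G2 ⊆ G) (hu : G1 ∪ G2 = G)
    (hedge : ∀ x ∈ G, ∀ y ∈ G, hDist x y = 1 → (x ∈ G1 ∧ y ∈ G1) ∨ (x ∈ G2 ∧ y ∈ G2))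
    (ha0 : IsAmple (G1 ∩ G2)) (X : Finset U) (hsh : Shatters G X) :
    Shatters G1 X ∨ Shatters G2 X := by
  classical
  by_cases hc1 : ∀ p : {i // i ∈ X} → Bool, ∃ a ∈ G1, ∀ i : {i // i ∈ X}, a i.1 = p i
  · left
    intro g
    obtain ⟨a, haG, hag⟩ := hc1 (fun i => g i.1)
    exact ⟨a, haG, fun i hi => hag ⟨i, hi⟩⟩
  by_cases hc2 : ∀ p : {i // i ∈ X} → Bool, ∃ a ∈ G2, ∀ i : {i // i ∈ X}, a i.1 = p i
  · right
    intro g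
    obtain ⟨a, haG, hag⟩ := hc2 (fun i => g i.1)
    exact ⟨a, haG, fun i hi => hag ⟨i, hi⟩⟩
  exfalso
  push_neg at hc1 hc2
  obtain ⟨p, hp⟩ := hc1
  obtain ⟨q, hq⟩ := hc2
  -- patterns realized in G
  have hreal : ∀ r : {i // i ∈ X} → Bool, ∃ a ∈ G, ∀ i : {i // i ∈ X}, a i.1 = r i := by
    intro r
    obtain ⟨a, haG, hag⟩ := hsh (fun j => if hj : j ∈ X then r ⟨j, hj⟩ else false)
    refine ⟨a, haG, fun i => ?_⟩
    have := hag i.1 i.2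
    rwa [dif_pos i.2] at this
  -- the trace of G0 on X
  set F0 : Finset ({i // i ∈ X} → Bool) :=
    univ.filter (fun r => ∃ w, (w ∈ G1 ∧ w ∈ G2) ∧ ∀ i : {i // i ∈ X}, w i.1 = r i) with hF0
  have mem_F0 : ∀ {r}, r ∈ F0 ↔
      ∃ w, (w ∈ G1 ∧ w ∈ G2) ∧ ∀ i : {i // i ∈ X}, w i.1 = r i := by
    intro r
    simp [hF0]
  -- key geometric fact: a pattern realized in both G1 and G2 is realized in G0
  have factB : ∀ (r : {i // i ∈ X} → Bool) (a b : U → Bool), a ∈ G1 → b ∈ G2 →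
      (∀ i : {i // i ∈ X}, a i.1 = r i) → (∀ i : {i // i ∈ X}, b i.1 = r i) → r ∈ F0 := by
    intro r a b ha hb har hbr
    by_cases hbG1 : b ∈ G1
    · exact mem_F0.2 ⟨b, ⟨hbG1, hb⟩, hbr⟩
    · obtain ⟨w, hw1, hw2, hwag⟩ := cross hG hedge (h1 ha) (h2 hb) ha hbG1
      refine mem_F0.2 ⟨w, ⟨hw1, hw2⟩, fun i => ?_⟩
      have hab : a i.1 = b i.1 := by rw [har i, hbr i]
      rw [hwag i.1 hab, har i]
  -- the trace of G0 is ample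
  have hampF0 : ampF F0 := by
    intro Y hY
    set Yu : Finset U := Y.image (fun i => i.1) with hYu
    have hmemYu : ∀ (i : {i // i ∈ X}), i.1 ∈ Yu ↔ i ∈ Y := by
      intro i
      simp only [hYu, mem_image]
      constructor
      · rintro ⟨i', hi', heq⟩
        have : i' = i := Subtype.ext heq
        rwa [← this]
      · intro hi
        exact ⟨i, hi, rfl⟩
    have hshY : Shatters (G1 ∩ G2) Yu := by
      intro g
      obtain ⟨s, hsF0, hsY⟩ := hY (fun i => g i.1)
      obtain ⟨w, hw, hwr⟩ := mem_F0.1 hsF0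
      refine ⟨w, hw, fun j hj => ?_⟩
      obtain ⟨i, hiY, hij⟩ := mem_image.1 hj
      subst hij
      rw [hwr i, hsY i hiY]
    obtain ⟨a, haY⟩ := ha0 Yu hshY
    refine ⟨fun i => a i.1, fun r => ?_⟩
    set h : U → Bool := fun j =>
      if hj : j ∈ X then (if (⟨j, hj⟩ : {i // i ∈ X}) ∈ Y then r ⟨j, hj⟩ else a j) else a j
      with hh
    have hwmem := haY h
    refine mem_F0.2 ⟨fun j => if j ∈ Yu then h j else a j, hwmem, fun i => ?_⟩
    by_cases hiY : i ∈ Y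
    · have hiYu : i.1 ∈ Yu := (hmemYu i).2 hiY
      simp only []
      rw [if_pos hiYu, if_pos hiY, hh]
      simp only []
      rw [dif_pos i.2]
      rw [if_pos (by rwa [Subtype.coe_eta])]
    · have hiYu : i.1 ∉ Yu := fun hh' => hiY ((hmemYu i).1 hh')
      simp only []
      rw [if_neg hiYu, if_neg hiY]
  -- p and q are not in F0
  have hpF0 : p ∉ F0 := by
    intro hmem
    obtain ⟨w, hw, hwr⟩ := mem_F0.1 hmem
    obtain ⟨i, hi⟩ := hp w hw.1
    exact hi (hwr i)
  have hqF0 : q ∉ F0 := by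
    intro hmem
    obtain ⟨w, hw, hwr⟩ := mem_F0.1 hmem
    obtain ⟨i, hi⟩ := hq w hw.2
    exact hi (hwr i)
  -- B1, B2 : unrealized patterns
  set B1 : Finset ({i // i ∈ X} → Bool) :=
    univ.filter (fun r => ∀ a ∈ G1, ∃ i : {i // i ∈ X}, a i.1 ≠ r i) with hB1
  set B2 : Finset ({i // i ∈ X} → Bool) :=
    univ.filter (fun r => ∀ a ∈ G2, ∃ i : {i // i ∈ X}, a i.1 ≠ r i) with hB2
  have mem_B1 : ∀ {r}, r ∈ B1 ↔ ∀ a ∈ G1, ∃ i : {i // i ∈ X}, a i.1 ≠ r i := by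
    intro r; simp [hB1]
  have mem_B2 : ∀ {r}, r ∈ B2 ↔ ∀ a ∈ G2, ∃ i : {i // i ∈ X}, a i.1 ≠ r i := by
    intro r; simp [hB2]
  have hpB1 : p ∈ B1 := mem_B1.2 hp
  have hqB2 : q ∈ B2 := mem_B2.2 hq
  have hcover : ∀ x ∈ (univ \ F0), x ∈ B1 ∨ x ∈ B2 := by
    intro x hx
    rw [mem_compl_iff] at hx
    by_contra hcon
    push_neg at hcon
    obtain ⟨hx1, hx2⟩ := hcon
    rw [mem_B1] at hx1
    rw [mem_B2] at hx2
    push_neg at hx1 hx2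
    obtain ⟨a, ha1, har⟩ := hx1
    obtain ⟨b, hb2, hbr⟩ := hx2
    exact hx (factB x a b ha1 hb2 har hbr)
  have hdisj : ∀ x, x ∈ B1 → x ∈ B2 → False := by
    intro x hx1 hx2
    obtain ⟨a, haG, har⟩ := hreal x
    rw [← hu] at haG
    rcases haG with h | h
    · obtain ⟨i, hi⟩ := mem_B1.1 hx1 a h
      exact hi (har i)
    · obtain ⟨i, hi⟩ := mem_B2.1 hx2 a h
      exact hi (har i)
  -- chain in the complement of F0, switch pair
  have hchain := ampF_compl_chain hampF0 hpF0 hqF0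
  obtain ⟨u, v, huB1, hvB2, huv⟩ := chain_switch hcover hdisj hchain hpB1 hqB2
  -- realizers for u and v
  obtain ⟨a, haG, har⟩ := hreal u
  obtain ⟨b, hbG, hbr⟩ := hreal v
  have ha1 : a ∉ G1 := by
    intro hh
    obtain ⟨i, hi⟩ := mem_B1.1 huB1 a hh
    exact hi (har i)
  have hb2 : b ∉ G2 := by
    intro hh
    obtain ⟨i, hi⟩ := mem_B2.1 hvB2 b hh
    exact hi (hbr i)
  have ha2 : a ∈ G2 := by
    rw [← hu] at haG
    rcases haG with h | h
    · exact absurd h ha1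
    · exact h
  have hb1 : b ∈ G1 := by
    rw [← hu] at hbG
    rcases hbG with h | h
    · exact h
    · exact absurd h hb2
  -- the unique coordinate where u and v differ
  obtain ⟨i₀, hi₀⟩ := Finset.card_eq_one.1 huv
  have hdiff : u i₀ ≠ v i₀ := by
    have : i₀ ∈ univ.filter (fun i => u i ≠ v i) := by rw [hi₀]; exact mem_singleton_self i₀
    exact (mem_filter.1 this).2
  have hsame : ∀ i : {i // i ∈ X}, i ≠ i₀ → u i = v i := by
    intro i hi
    by_contra hne
    have : i ∈ univ.filter (fun i => u i ≠ v i) := mem_filter.2 ⟨mem_univ i, hne⟩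
    rw [hi₀, mem_singleton] at this
    exact hi this
  -- geodesic from b to a passes through G0
  obtain ⟨w, hw1, hw2, hwag⟩ := cross hG hedge (h1 hb1) (h2 ha2) hb1 ha1
  have hwv : ∀ i : {i // i ∈ X}, i ≠ i₀ → w i.1 = v i := by
    intro i hi
    have hab : b i.1 = a i.1 := by rw [hbr i, har i, hsame i hi]
    rw [hwag i.1 hab, hbr i]
  by_cases hwi : w i₀.1 = v i₀
  · -- w realizes v in G2, contradiction
    obtain ⟨i, hi⟩ := mem_B2.1 hvB2 w hw2
    apply hi
    by_cases hii : i = i₀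
    · rw [hii]; exact hwi
    · exact hwv i hii
  · -- w realizes u in G1, contradiction
    have hbool : ∀ x y z : Bool, x ≠ z → y ≠ z → x = y := by decide
    obtain ⟨i, hi⟩ := mem_B1.1 huB1 w hw1
    apply hi
    by_cases hii : i = i₀
    · rw [hii]
      exact hbool _ _ _ hwi hdiff
    · rw [hwv i hii, hsame i hii]

end Main

section Final
variable [Fintype U] [DecidableEq U]

noncomputable def toFin (A : Set (U → Bool)) : Finset (U → Bool) :=
  (Set.toFinite A).toFinset

lemma mem_toFin {A : Set (U → Bool)} {x : U → Bool} : x ∈ toFin A ↔ x ∈ A :=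
  Set.Finite.mem_toFinset _

lemma shatF_toFin {A : Set (U → Bool)} {X : Finset U} :
    shatF (toFin A) X ↔ Shatters A X := by
  constructor
  · intro h g
    obtain ⟨a, ha, hag⟩ := h g
    exact ⟨a, mem_toFin.1 ha, hag⟩
  · intro h g
    obtain ⟨a, ha, hag⟩ := h g
    exact ⟨a, mem_toFin.2 ha, hag⟩

lemma sshatF_toFin {A : Set (U → Bool)} {X : Finset U} :
    sshatF (toFin A) X ↔ StronglyShatters A X := by
  constructor
  · rintro ⟨a, ha⟩
    exact ⟨a, fun g => mem_toFin.1 (ha g)⟩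
  · rintro ⟨a, ha⟩
    exact ⟨a, fun g => mem_toFin.2 (ha g)⟩

lemma ampF_toFin {A : Set (U → Bool)} (h : IsAmple A) : ampF (toFin A) := by
  intro X hX
  exact sshatF_toFin.2 (h X (shatF_toFin.1 hX))

end Final

/-- If a partial cube `G` (an isometric subgraph of the hypercube) is an
AMP-amalgam of two ample partial cubes `G1` and `G2` (they cover all vertices and edges of
`G`, and `G0 = G1 ∩ G2` is a nonempty ample partial cube different from `G1` and `G2`),
then `G` is ample. -/
theorem stmt17 [Fintype U] [DecidableEq U] (G G1 G2 : Set (U → Bool))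
    (hG : IsPartialCube G)
    (h1 : G1 ⊆ G) (h2 : G2 ⊆ G) (hu : G1 ∪ G2 = G)
    (hne : (G1 ∩ G2).Nonempty) (hp1 : G1 ∩ G2 ≠ G1) (hp2 : G1 ∩ G2 ≠ G2)
    (hedge : ∀ x ∈ G, ∀ y ∈ G, hDist x y = 1 → (x ∈ G1 ∧ y ∈ G1) ∨ (x ∈ G2 ∧ y ∈ G2))
    (hpc1 : IsPartialCube G1) (ha1 : IsAmple G1)
    (hpc2 : IsPartialCube G2) (ha2 : IsAmple G2)
    (hpc0 : IsPartialCube (G1 ∩ G2)) (ha0 : IsAmple (G1 ∩ G2)) :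
    IsAmple G := by
  classical
  -- pass to finsets
  set Gf := toFin G with hGf
  set G1f := toFin G1 with hG1f
  set G2f := toFin G2 with hG2f
  set G0f := toFin (G1 ∩ G2) with hG0f
  have hGfu : Gf = G1f ∪ G2f := by
    ext x
    simp only [mem_union, hGf, hG1f, hG2f, mem_toFin, ← hu]
    rfl
  have hGf0 : G0f = G1f ∩ G2f := by
    ext x
    simp only [mem_inter, hG0f, hG1f, hG2f, mem_toFin]
    rfl
  -- the key claim : every set shattered by G is shattered by G1 or G2
  have hclaim : shS Gf ⊆ shS G1f ∪ shS G2f := by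
    intro X hX
    rw [mem_shS, shatF_toFin] at hX
    rcases claim_main hG h1 h2 hu hedge ha0 X hX with h | h
    · exact mem_union_left _ (mem_shS.2 (shatF_toFin.2 h))
    · exact mem_union_right _ (mem_shS.2 (shatF_toFin.2 h))
  have hsub0 : shS G0f ⊆ shS G1f ∩ shS G2f := by
    intro X hX
    rw [hGf0] at hX
    rw [mem_inter]
    exact ⟨shS_mono inter_subset_left hX, shS_mono inter_subset_right hX⟩
  -- ample parts are extremal
  have hext : ∀ (A : Set (U → Bool)), IsAmple A → (shS (toFin A)).card = (toFin A).card := by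
    intro A hA
    have hle : shS (toFin A) ⊆ sshS (toFin A) := by
      intro X hX
      rw [mem_shS] at hX
      rw [mem_sshS]
      exact ampF_toFin hA X hX
    have := card_le_card hle
    have hdp := dual_pajor (toFin A)
    have hpj := pajor (toFin A)
    omega
  have he1 : (shS G1f).card = G1f.card := hext G1 ha1
  have he2 : (shS G2f).card = G2f.card := hext G2 ha2
  -- inclusion-exclusion counts
  have hie1 : (shS G1f ∪ shS G2f).card + (shS G1f ∩ shS G2f).card
      = (shS G1f).card + (shS G2f).card := card_union_add_card_inter _ _
  have hie2 : Gf.card + G0f.card = G1f.card + G2f.card := by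
    rw [hGfu, hGf0]
    exact card_union_add_card_inter _ _
  have hc1 := card_le_card hclaim
  have hc2 := card_le_card hsub0
  have hpj0 := pajor G0f
  have hpjG := pajor Gf
  have hkey : (shS Gf).card ≤ Gf.card := by omega
  -- conclude ampleness
  intro X hX
  have hshf : shatF Gf X := shatF_toFin.2 hX
  have := extremal_sshat X.card X Gf le_rfl hkey hshf
  exact sshatF_toFin.1 this
end

section
/- A peripheral expansion of an ample partial cube G with respect to an ample subgraph H of G is again an ample partial cube. -/
open Finset
open scoped Classical

variable {U : Type*}

/-- Extend a vertex of the cube on `U` to a vertex of the cube on `Option U`, using `b` as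
the value of the new coordinate `none`. -/
def ext0 (f : U → Bool) (b : Bool) : Option U → Bool := fun o => o.elim b f

/-! ### Auxiliary lemmas -/

section Aux
variable [Fintype U] [DecidableEq U]

lemma hDist_triangle_s18 (x y z : U → Bool) : hDist x z ≤ hDist x y + hDist y z := by
  unfold hDist
  refine le_trans (Finset.card_le_card ?_) (Finset.card_union_le _ _)
  intro i hi
  simp only [Finset.mem_filter, Finset.mem_union, Finset.mem_univ, true_and] at *
  by_contra h
  push_neg at h
  exact hi (h.1.trans h.2)

lemma hDist_ext0_same (f g : U → Bool) (b : Bool) :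
    hDist (ext0 f b) (ext0 g b) = hDist f g := by
  unfold hDist
  have : (Finset.univ.filter fun o => ext0 f b o ≠ ext0 g b o)
      = (Finset.univ.filter fun i => f i ≠ g i).image some := by
    ext o; simp only [Finset.mem_filter, Finset.mem_univ, true_and, Finset.mem_image]
    cases o <;> simp [ext0]
  rw [this, Finset.card_image_of_injective _ (Option.some_injective _)]

lemma hDist_ext0_flip (f g : U → Bool) :
    hDist (ext0 f false) (ext0 g true) = hDist f g + 1 := by
  unfold hDist
  have : (Finset.univ.filter fun o => ext0 f false o ≠ ext0 g true o)
      = insert none ((Finset.univ.filter fun i => f i ≠ g i).image some) := by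
    ext o
    simp only [Finset.mem_filter, Finset.mem_univ, true_and, Finset.mem_image, Finset.mem_insert]
    cases o <;> simp [ext0]
  rw [this, Finset.card_insert_of_notMem (by simp),
    Finset.card_image_of_injective _ (Option.some_injective _)]

lemma walk_ge {A : Set (U → Bool)} {a b : A}
    (w : ((cubeGraph U).induce A).Walk a b) : hDist a.1 b.1 ≤ w.length := by
  induction w with
  | nil => simp [hDist_self]
  | @cons u v c h w ih =>
    have hadj : hDist u.1 v.1 = 1 := h
    calc hDist u.1 c.1 ≤ hDist u.1 v.1 + hDist v.1 c.1 := hDist_triangle_s18 _ _ _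
      _ ≤ 1 + w.length := by rw [hadj]; omega
      _ = (SimpleGraph.Walk.cons h w).length := by simp [SimpleGraph.Walk.length_cons]; omega

lemma dIn_eq_of_walk {A : Set (U → Bool)} {x y : U → Bool} (hx : x ∈ A) (hy : y ∈ A)
    (w : ((cubeGraph U).induce A).Walk ⟨x, hx⟩ ⟨y, hy⟩) (hw : w.length = hDist x y) :
    dIn A x y = hDist x y := by
  unfold dIn
  rw [dif_pos ⟨hx, hy⟩]
  apply le_antisymm
  · exact hw ▸ SimpleGraph.dist_le w
  · obtain ⟨w', hw'⟩ := (w.reachable).exists_walk_length_eq_dist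
    rw [← hw']; exact walk_ge w'

lemma exists_geodesic {A : Set (U → Bool)} (hA : IsPartialCube A)
    {x y : U → Bool} (hx : x ∈ A) (hy : y ∈ A) :
    ∃ w : ((cubeGraph U).induce A).Walk ⟨x, hx⟩ ⟨y, hy⟩, w.length = hDist x y := by
  obtain ⟨w, hw⟩ := (hA.1.preconnected ⟨x, hx⟩ ⟨y, hy⟩).exists_walk_length_eq_dist
  refine ⟨w, ?_⟩
  have h2 := hA.2 x hx y hy
  unfold dIn at h2
  rw [dif_pos ⟨hx, hy⟩] at h2
  rw [hw]; exact h2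

/-- The peripheral expansion of `G` along `H`, described as a set comprehension. -/
def pexp (G H : Set (U → Bool)) : Set (Option U → Bool) :=
  {z | (∃ f ∈ G, z = ext0 f false) ∨ (∃ f ∈ H, z = ext0 f true)}

/-- Graph homomorphism induced by `ext0 · b`. -/
def extHom {A : Set (U → Bool)} {B : Set (Option U → Bool)} (b : Bool)
    (hAB : ∀ f ∈ A, ext0 f b ∈ B) :
    ((cubeGraph U).induce A) →g ((cubeGraph (Option U)).induce B) where
  toFun f := ⟨ext0 f.1 b, hAB f.1 f.2⟩
  map_rel' := by
    intro f g h
    show hDist (ext0 f.1 b) (ext0 g.1 b) = 1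
    rw [hDist_ext0_same]; exact h

lemma expWalkF {G H : Set (U → Bool)}
    (hGpc : IsPartialCube G) (hHG : H ⊆ G)
    {f : U → Bool} (hf : f ∈ G) {y : Option U → Bool}
    (hx : ext0 f false ∈ pexp G H) (hy : y ∈ pexp G H) :
    ∃ w : ((cubeGraph (Option U)).induce (pexp G H)).Walk ⟨ext0 f false, hx⟩ ⟨y, hy⟩,
      w.length = hDist (ext0 f false) y := by
  have hGE : ∀ a ∈ G, ext0 a false ∈ pexp G H := fun a ha => Or.inl ⟨a, ha, rfl⟩
  rcases hy with ⟨g, hg, rfl⟩ | ⟨g, hg, rfl⟩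
  · obtain ⟨wG, hwG⟩ := exists_geodesic hGpc hf hg
    refine ⟨wG.map (extHom false hGE), ?_⟩
    exact (SimpleGraph.Walk.length_map _ _).trans (by rw [hwG, hDist_ext0_same])
  · obtain ⟨wG, hwG⟩ := exists_geodesic hGpc hf (hHG hg)
    have hadj : ((cubeGraph (Option U)).induce (pexp G H)).Adj
        ⟨ext0 g false, hGE g (hHG hg)⟩ ⟨ext0 g true, Or.inr ⟨g, hg, rfl⟩⟩ := by
      show hDist (ext0 g false) (ext0 g true) = 1
      rw [hDist_ext0_flip, hDist_self]
    refine ⟨(wG.map (extHom false hGE)).concat hadj, ?_⟩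
    exact (SimpleGraph.Walk.length_concat _ _).trans
      ((congrArg (· + 1) ((SimpleGraph.Walk.length_map _ _).trans hwG)).trans
        (hDist_ext0_flip f g).symm)

lemma expWalk {G H : Set (U → Bool)}
    (hGpc : IsPartialCube G) (hHpc : IsPartialCube H) (hHG : H ⊆ G)
    {x y : Option U → Bool} (hx : x ∈ pexp G H) (hy : y ∈ pexp G H) :
    ∃ w : ((cubeGraph (Option U)).induce (pexp G H)).Walk ⟨x, hx⟩ ⟨y, hy⟩,
      w.length = hDist x y := by
  have hHE : ∀ a ∈ H, ext0 a true ∈ pexp G H := fun a ha => Or.inr ⟨a, ha, rfl⟩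
  rcases hx with ⟨f, hf, rfl⟩ | ⟨f, hf, rfl⟩
  · exact expWalkF hGpc hHG hf _ hy
  · rcases hy with ⟨g, hg, rfl⟩ | ⟨g, hg, rfl⟩
    · obtain ⟨w, hw⟩ := expWalkF hGpc hHG hg (Or.inl ⟨g, hg, rfl⟩) (Or.inr ⟨f, hf, rfl⟩)
      exact ⟨w.reverse, by rw [SimpleGraph.Walk.length_reverse, hw, hDist_comm]⟩
    · obtain ⟨wH, hwH⟩ := exists_geodesic hHpc hf hg
      refine ⟨wH.map (extHom true hHE), ?_⟩
      exact (SimpleGraph.Walk.length_map _ _).trans (by rw [hwH, hDist_ext0_same])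

end Aux

/-- A peripheral expansion of an ample partial cube `G` with respect to an
ample (isometric) subgraph `H ⊆ G` is again an ample partial cube. -/
theorem stmt18 [Fintype U] [DecidableEq U] (G H : Set (U → Bool))
    (hGpc : IsPartialCube G) (hGa : IsAmple G)
    (hHG : H ⊆ G) (hHpc : IsPartialCube H) (hHa : IsAmple H) :
    IsPartialCube ((fun f => ext0 f false) '' G ∪ (fun f => ext0 f true) '' H) ∧
    IsAmple ((fun f => ext0 f false) '' G ∪ (fun f => ext0 f true) '' H) := by
  have hE : ((fun f => ext0 f false) '' G ∪ (fun f => ext0 f true) '' H) = pexp G H := by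
    ext z
    simp only [Set.mem_union, Set.mem_image, pexp, Set.mem_setOf_eq]
    constructor
    · rintro (⟨f, hf, rfl⟩ | ⟨f, hf, rfl⟩)
      · exact Or.inl ⟨f, hf, rfl⟩
      · exact Or.inr ⟨f, hf, rfl⟩
    · rintro (⟨f, hf, rfl⟩ | ⟨f, hf, rfl⟩)
      · exact Or.inl ⟨f, hf, rfl⟩
      · exact Or.inr ⟨f, hf, rfl⟩
  rw [hE]
  constructor
  · -- partial cube
    constructor
    · -- connected
      obtain ⟨⟨g₀, hg₀⟩⟩ := hGpc.1.nonempty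
      haveI : Nonempty ↑(pexp G H) := ⟨⟨ext0 g₀ false, Or.inl ⟨g₀, hg₀, rfl⟩⟩⟩
      refine SimpleGraph.Connected.mk ?_
      intro a b
      obtain ⟨w, -⟩ := expWalk hGpc hHpc hHG a.2 b.2
      exact w.reachable
    · intro x hx y hy
      obtain ⟨w, hw⟩ := expWalk hGpc hHpc hHG hx hy
      exact dIn_eq_of_walk hx hy w hw
  · -- ample
    intro X hX
    set X' : Finset U := Finset.univ.filter (fun u => some u ∈ X) with hX'def
    have hmemX' : ∀ u : U, u ∈ X' ↔ some u ∈ X := by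
      intro u; simp [hX'def]
    by_cases hnone : none ∈ X
    · -- use ampleness of H
      have hshat : Shatters H X' := by
        intro g'
        obtain ⟨a, ha, hag⟩ := hX (ext0 g' true)
        rcases ha with ⟨f, hf, rfl⟩ | ⟨f, hf, rfl⟩
        · have := hag none hnone
          simp [ext0] at this
        · refine ⟨f, hf, fun u hu => ?_⟩
          have := hag (some u) ((hmemX' u).1 hu)
          simpa [ext0] using this
      obtain ⟨a₀, ha₀⟩ := hHa X' hshat
      refine ⟨ext0 a₀ false, fun g => ?_⟩
      have hfmem : (fun u => if u ∈ X' then g (some u) else a₀ u) ∈ H := ha₀ _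
      have heq : (fun o => if o ∈ X then g o else ext0 a₀ false o)
          = ext0 (fun u => if u ∈ X' then g (some u) else a₀ u) (g none) := by
        funext o
        cases o with
        | none => simp [ext0, hnone]
        | some u => simp [ext0, hmemX' u]
      rw [heq]
      cases hgn : g none
      · exact Or.inl ⟨_, hHG hfmem, rfl⟩
      · exact Or.inr ⟨_, hfmem, rfl⟩
    · -- use ampleness of G
      have hshat : Shatters G X' := by
        intro g'
        obtain ⟨a, ha, hag⟩ := hX (ext0 g' false)
        rcases ha with ⟨f, hf, rfl⟩ | ⟨f, hf, rfl⟩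
        · refine ⟨f, hf, fun u hu => ?_⟩
          have := hag (some u) ((hmemX' u).1 hu)
          simpa [ext0] using this
        · refine ⟨f, hHG hf, fun u hu => ?_⟩
          have := hag (some u) ((hmemX' u).1 hu)
          simpa [ext0] using this
      obtain ⟨a₀, ha₀⟩ := hGa X' hshat
      refine ⟨ext0 a₀ false, fun g => ?_⟩
      have hfmem : (fun u => if u ∈ X' then g (some u) else a₀ u) ∈ G := ha₀ _
      have heq : (fun o => if o ∈ X then g o else ext0 a₀ false o)
          = ext0 (fun u => if u ∈ X' then g (some u) else a₀ u) false := by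
        funext o
        cases o with
        | none => simp [ext0, hnone]
        | some u => simp [ext0, hmemX' u]
      rw [heq]
      exact Or.inl ⟨_, hfmem, rfl⟩
end
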